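/- arXiv:2410.14190 — 5 statements merged into one kernel-verified Lean document; each statement's English description precedes it below -/
import Mathlib

section
/- If n is a positive integer that is not a perfect square, then the number of two-color partitions of n into distinct parts with even parts only in blue and an even number of even parts equals the number of such partitions with an odd number of even parts. -/
open scoped BigOperators

noncomputable def qPoch (a q : ℂ) (n : ℕ) : ℂ := ∏ j ∈ Finset.range n, (1 - a * q ^ j)

noncomputable def qPochInf (a q : ℂ) : ℂ := ∏' j : ℕ, (1 - a * q ^ j)

/-- Two-color partitions of `n` into distinct parts (a finset of blue parts and a
finset of green parts), where even parts occur only in blue (green parts are odd). -/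
def IsEPartition (n : ℕ) (p : Finset ℕ × Finset ℕ) : Prop :=
  (∀ b ∈ p.1, 0 < b) ∧ (∀ g ∈ p.2, Odd g) ∧ p.1.sum id + p.2.sum id = n

open Polynomial Finset

noncomputable section

/-- Gaussian binomial coefficient as a polynomial in `ℤ[Q]`. -/
def gb : ℕ → ℕ → Polynomial ℤ
  | 0, 0 => 1
  | 0, _ + 1 => 0
  | _ + 1, 0 => 1
  | n + 1, k + 1 => gb n (k + 1) + X ^ (n - k) * gb n k

@[simp] lemma gb_zero_right (n : ℕ) : gb n 0 = 1 := by cases n <;> rfl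

lemma gbS (n k : ℕ) : gb (n + 1) (k + 1) = gb n (k + 1) + X ^ (n - k) * gb n k := rfl

lemma gb_eq_zero {n k : ℕ} (h : n < k) : gb n k = 0 := by
  induction n generalizing k with
  | zero => cases k with
    | zero => omega
    | succ k => rfl
  | succ n ih =>
    cases k with
    | zero => omega
    | succ k =>
      rw [gbS, ih (by omega), ih (by omega)]
      ring

@[simp] lemma gb_diag (n : ℕ) : gb n n = 1 := by
  induction n with
  | zero => rfl
  | succ n ih => rw [gbS, gb_eq_zero (by omega), show n - n = 0 from by omega, ih]; ring

/-- second q-Pascal identity -/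
lemma gb_pascal2 (n k : ℕ) : gb (n + 1) (k + 1) = X ^ (k + 1) * gb n (k + 1) + gb n k := by
  induction n generalizing k with
  | zero =>
    cases k with
    | zero => rw [gbS]; norm_num [show gb 0 1 = 0 from rfl]
    | succ k => rw [gbS, gb_eq_zero (show 0 < k + 2 by omega), gb_eq_zero (show 0 < k + 1 by omega)]; ring
  | succ n ih =>
    cases k with
    | zero =>
      have h1 := ih 0
      have h2 := gbS n 0
      simp only [gb_zero_right, mul_one, pow_one, Nat.sub_zero] at h1 h2 ⊢
      rw [gbS (n+1) 0]
      simp only [gb_zero_right, mul_one, Nat.sub_zero]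
      linear_combination h1 - X * h2
    | succ k =>
      rcases lt_trichotomy n k with hnk | rfl | hnk
      · rw [gbS (n+1) (k+1), gb_eq_zero (show n + 1 < k + 2 by omega),
          gb_eq_zero (show n + 1 < k + 1 by omega)]
        ring
      · simp [gb_eq_zero (show n + 1 < n + 2 by omega)]
      · have e1 := ih (k + 1)
        have e2 := ih k
        have r1 := gbS (n + 1) (k + 1)
        have r2 := gbS n (k + 1)
        have r3 := gbS n k
        have hp1 : (X : Polynomial ℤ) ^ (n - k) * X ^ (k + 1) = X ^ (n + 1) := by
          rw [← pow_add]; congr 1; omega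
        have hp2 : (X : Polynomial ℤ) ^ (k + 1 + 1) * X ^ (n - (k + 1)) = X ^ (n + 1) := by
          rw [← pow_add]; congr 1; omega
        rw [show n + 1 - (k + 1) = n - k from by omega] at r1
        linear_combination r1 + e1 - X ^ (k + 1 + 1) * r2 + X ^ (n - k) * e2 - r3 +
          gb n (k + 1) * (hp1 - hp2)

/-- q-Pochhammer `∏_{j=1}^{M} (1 - Q^j)`. -/
def poch (M : ℕ) : Polynomial ℤ := ∏ j ∈ range M, (1 - X ^ (j + 1))

lemma poch_succ (M : ℕ) : poch (M + 1) = poch M * (1 - X ^ (M + 1)) := by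
  rw [poch, prod_range_succ]; rfl

lemma gb_mul_poch : ∀ n k, k ≤ n → gb n k * (poch k * poch (n - k)) = poch n := by
  intro n
  induction n with
  | zero => intro k hk; interval_cases k; simp [poch]
  | succ n ih =>
    intro k hk
    rcases Nat.eq_or_lt_of_le hk with rfl | hlt
    · simp [poch]
    · cases k with
      | zero => simp [poch]
      | succ k =>
        have hkn : k + 1 ≤ n := by omega
        have h1 := ih (k + 1) hkn
        have h2 := ih k (by omega)
        rw [gbS]
        have hs1 : n + 1 - (k + 1) = n - k := by omega
        have hs2 : poch (n - k) = poch (n - (k + 1)) * (1 - X ^ (n - k)) := by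
          rw [show n - k = (n - (k+1)) + 1 from by omega, poch_succ, show n - (k+1) + 1 = n - k from by omega]
        have hs3 : poch (k + 1) = poch k * (1 - X ^ (k + 1)) := poch_succ k
        have hp : (X : Polynomial ℤ) ^ (n - k) * X ^ (k + 1) = X ^ (n + 1) := by
          rw [← pow_add]; congr 1; omega
        rw [hs1]
        calc (gb n (k + 1) + X ^ (n - k) * gb n k) * (poch (k + 1) * poch (n - k))
            = gb n (k + 1) * (poch (k + 1) * poch (n - (k+1))) * (1 - X ^ (n - k))
              + X ^ (n - k) * (gb n k * (poch k * poch (n - k))) * (1 - X ^ (k + 1)) := by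
              rw [hs2, hs3]; ring
          _ = poch n * ((1 - X ^ (n - k)) + X ^ (n - k) * (1 - X ^ (k + 1))) := by
              rw [h1, h2]; ring
          _ = poch n * (1 - X ^ (n + 1)) := by linear_combination (-(poch n)) * hp
          _ = poch (n + 1) := (poch_succ n).symm

/-- `gb (2N+2)` triple recurrence, for `d = e+2 ≥ 2`. -/
lemma gb_triple (N e : ℕ) (he : e ≤ 2 * N) :
    gb (2*N + 2) (e + 2) = X ^ (e + 2) * gb (2*N) (e + 2)
      + (1 + X ^ (2*N + 1)) * gb (2*N) (e + 1) + X ^ (2*N - e) * gb (2*N) e := by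
  have h1 : gb (2*N + 2) (e + 2) = X ^ (e + 2) * gb (2*N + 1) (e + 2) + gb (2*N + 1) (e + 1) :=
    gb_pascal2 (2*N + 1) (e + 1)
  have h2 : gb (2*N + 1) (e + 2) = gb (2*N) (e + 2) + X ^ (2*N - (e + 1)) * gb (2*N) (e + 1) :=
    gbS (2*N) (e + 1)
  have h3 : gb (2*N + 1) (e + 1) = gb (2*N) (e + 1) + X ^ (2*N - e) * gb (2*N) e :=
    gbS (2*N) e
  rcases Nat.lt_or_ge e (2*N) with hlt | hge
  · have hp : (X : Polynomial ℤ) ^ (e + 2) * X ^ (2*N - (e + 1)) = X ^ (2*N + 1) := by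
      rw [← pow_add]; congr 1; omega
    linear_combination h1 + X ^ (e + 2) * h2 + h3 + gb (2*N) (e + 1) * hp
  · have heq : e = 2 * N := by omega
    subst heq
    rw [gb_eq_zero (show 2*N < 2*N + 1 by omega), gb_eq_zero (show 2*N < 2*N + 2 by omega)] at *
    have : 2*N - (2*N + 1) = 0 := by omega
    rw [this] at h2
    linear_combination h1 + X ^ (2*N + 2) * h2 + h3

lemma gb_one (N : ℕ) : gb (2*N + 2) 1 = X * gb (2*N) 1 + (1 + X ^ (2*N + 1)) := by
  have h1 : gb (2*N + 2) 1 = X ^ 1 * gb (2*N + 1) 1 + gb (2*N + 1) 0 := gb_pascal2 (2*N + 1) 0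
  have h2 : gb (2*N + 1) 1 = gb (2*N) 1 + X ^ (2*N - 0) * gb (2*N) 0 := gbS (2*N) 0
  simp only [gb_zero_right, mul_one, Nat.sub_zero, pow_one] at h1 h2
  linear_combination h1 + X * h2

/-- exponent `(k - N)²`. -/
def ee (N k : ℕ) : ℕ := ((k : ℤ) - N).natAbs ^ 2

lemma ee_cast (N k : ℕ) : (ee N k : ℤ) = ((k : ℤ) - N) ^ 2 := by
  simp [ee, Int.natAbs_sq]

abbrev SS := Polynomial (Polynomial ℤ)

/-- the coefficient of `z^k` in the finite Jacobi triple product -/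
def coefE (N k : ℕ) : Polynomial ℤ := X ^ (ee N k) * (expand ℤ 2 (gb (2*N) k))

lemma coefE_eq_zero {N k : ℕ} (h : 2*N < k) : coefE N k = 0 := by
  simp [coefE, gb_eq_zero h]

lemma coeff_sum_CX (M d : ℕ) (c : ℕ → Polynomial ℤ) :
    (∑ k ∈ range M, (C (c k) : SS) * X ^ k).coeff d = if d < M then c d else 0 := by
  rw [finset_sum_coeff]
  simp only [coeff_C_mul, coeff_X_pow, mul_ite, mul_one, mul_zero]
  rw [Finset.sum_ite_eq (range M) d c]
  simp [mem_range]

lemma expand_two_pow (a : ℕ) : expand ℤ 2 (X ^ a : Polynomial ℤ) = X ^ (2*a) := by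
  rw [map_pow, expand_X, ← pow_mul, mul_comm]

def jt (N : ℕ) : SS := ∏ j ∈ range N, ((1 + C (X ^ (2*j+1)) * X) * (X + C (X ^ (2*j+1))))

theorem jtp (N : ℕ) : jt N = ∑ k ∈ range (2*N + 1), (C (coefE N k) : SS) * X ^ k := by
  induction N with
  | zero =>
    simp [jt, coefE, ee, show gb 0 0 = 1 from rfl]
  | succ N ih =>
    set w : Polynomial ℤ := X ^ (2*N+1) with hw
    have hjt : jt (N + 1) = jt N * ((1 + C w * X) * (X + C w)) := by
      rw [jt, prod_range_succ]; rfl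
    have expand3 : ((1 : SS) + C w * X) * (X + C w) = C w + C (1 + w^2) * X^1 + C w * X^2 := by
      simp only [map_add, map_one, map_pow]
      ring
    rw [hjt, ih, expand3]
    refine Polynomial.ext fun d => ?_
    rw [mul_add, mul_add, ← mul_assoc, ← mul_assoc]
    rw [coeff_add, coeff_add, coeff_mul_C]
    rw [coeff_mul_X_pow', coeff_mul_X_pow', coeff_mul_C, coeff_mul_C]
    rw [coeff_sum_CX, coeff_sum_CX, coeff_sum_CX, coeff_sum_CX]
    -- now a statement about Polynomial ℤ values
    have hA : ∀ k, (if k < 2*N + 1 then coefE N k else 0) = coefE N k := by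
      intro k
      split_ifs with h
      · rfl
      · rw [coefE_eq_zero (by omega)]
    simp only [hA]
    rcases d with _ | _ | e
    · -- d = 0
      rw [if_neg (by omega), if_neg (by omega), if_pos (by omega)]
      simp only [coefE, gb_zero_right, map_one, mul_one]
      rw [add_zero, add_zero, hw, ← pow_add]
      congr 1
      have h : ((ee N 0 + (2*N+1) : ℕ) : ℤ) = ((ee (N+1) 0 : ℕ) : ℤ) := by
        push_cast [ee_cast]; ring
      exact_mod_cast h
    · -- d = 1
      rw [if_pos (by omega), if_neg (by omega), if_pos (by omega)]
      rw [add_zero]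
      have hT : expand ℤ 2 (gb (2*N + 2) 1)
          = X^2 * expand ℤ 2 (gb (2*N) 1) + 1 + X^(4*N+2) := by
        rw [gb_one, map_add, map_add, map_mul, expand_X, map_one, expand_two_pow,
          show 2*(2*N+1) = 4*N+2 from by omega]
        ring
      have hw2 : w ^ 2 = X ^ (4*N+2) := by
        rw [hw, ← pow_mul, show (2*N+1)*2 = 4*N+2 from by omega]
      have m2 : ee N 0 = ee (N+1) 1 := by
        have h : ((ee N 0 : ℕ) : ℤ) = ((ee (N+1) 1 : ℕ) : ℤ) := by push_cast [ee_cast]; ring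
        exact_mod_cast h
      have m1 : (X : Polynomial ℤ) ^ (ee N 1) * X^(2*N+1) = X ^ (ee (N+1) 1) * X^2 := by
        rw [← pow_add, ← pow_add]
        congr 1
        have h : ((ee N 1 + (2*N+1) : ℕ) : ℤ) = ((ee (N+1) 1 + 2 : ℕ) : ℤ) := by
          push_cast [ee_cast]; ring
        exact_mod_cast h
      simp only [coefE, m2, hw2, hw, zero_add, Nat.add_sub_cancel,
        show (1:ℕ) - 1 = 0 from rfl, gb_zero_right, map_one, mul_one,
        show 2*(N+1) = 2*N+2 from by omega]
      linear_combination (expand ℤ 2 (gb (2*N) 1)) * m1 - (X:Polynomial ℤ) ^ (ee (N+1) 1) * hT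
    · -- d = e + 2
      rw [if_pos (by omega), if_pos (by omega)]
      rw [show e + 1 + 1 - 1 = e + 1 from by omega, show e + 1 + 1 - 2 = e from by omega]
      by_cases he : e ≤ 2*N
      · rw [if_pos (by omega)]
        have hT : expand ℤ 2 (gb (2*N + 2) (e + 2))
            = X^(2*(e+2)) * expand ℤ 2 (gb (2*N) (e+2))
              + (1 + X^(4*N+2)) * expand ℤ 2 (gb (2*N) (e+1))
              + X^(2*(2*N-e)) * expand ℤ 2 (gb (2*N) e) := by
          rw [gb_triple N e he, map_add, map_add, map_mul, map_mul, map_mul, map_add, map_one,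
            expand_two_pow, expand_two_pow, expand_two_pow,
            show 2*(2*N+1) = 4*N+2 from by omega]
        have hw2 : w ^ 2 = X ^ (4*N+2) := by
          rw [hw, ← pow_mul, show (2*N+1)*2 = 4*N+2 from by omega]
        have m1 : ee N (e+1) = ee (N+1) (e+2) := by
          have h : ((ee N (e+1) : ℕ) : ℤ) = ((ee (N+1) (e+2) : ℕ) : ℤ) := by
            push_cast [ee_cast]; ring
          exact_mod_cast h
        have m2 : (X : Polynomial ℤ) ^ (ee N (e+2)) * X^(2*N+1)
            = X ^ (ee (N+1) (e+2)) * X^(2*(e+2)) := by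
          rw [← pow_add, ← pow_add]
          congr 1
          have h : ((ee N (e+2) + (2*N+1) : ℕ) : ℤ) = ((ee (N+1) (e+2) + 2*(e+2) : ℕ) : ℤ) := by
            push_cast [ee_cast]; ring
          exact_mod_cast h
        have m0 : (X : Polynomial ℤ) ^ (ee N e) * X^(2*N+1)
            = X ^ (ee (N+1) (e+2)) * X^(2*(2*N-e)) := by
          rw [← pow_add, ← pow_add]
          congr 1
          have h : ((ee N e + (2*N+1) : ℕ) : ℤ) = ((ee (N+1) (e+2) + 2*(2*N-e) : ℕ) : ℤ) := by
            push_cast [ee_cast, Nat.cast_sub he]; ring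
          exact_mod_cast h
        simp only [coefE, m1, hw2, hw, show 2*(N+1) = 2*N+2 from by omega,
          show e + 1 + 1 = e + 2 from rfl]
        linear_combination (expand ℤ 2 (gb (2*N) (e+2))) * m2 + (expand ℤ 2 (gb (2*N) e)) * m0
          - (X:Polynomial ℤ) ^ (ee (N+1) (e+2)) * hT
      · rw [if_neg (by omega)]
        rw [coefE_eq_zero (show 2*N < e+1+1 by omega), coefE_eq_zero (show 2*N < e+1 by omega),
          coefE_eq_zero (show 2*N < e by omega)]
        ring

end

noncomputable section

/-- Key cancellation: low coefficients of `poch M * gb (2M) k` vanish. -/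
lemma poch_gb_coeff (M k t : ℕ) (ht : 1 ≤ t) (h1 : t ≤ k) (h2 : t ≤ 2*M - k)
    (hk : k ≤ 2*M) (h3 : t ≤ M) : (poch M * gb (2*M) k).coeff t = 0 := by
  classical
  set I : Ideal (PowerSeries ℤ) := Ideal.span {(PowerSeries.X : PowerSeries ℤ) ^ (t+1)} with hI
  let π : PowerSeries ℤ →+* PowerSeries ℤ ⧸ I := Ideal.Quotient.mk I
  let Φ : Polynomial ℤ →+* PowerSeries ℤ ⧸ I := π.comp (Polynomial.coeToPowerSeries.ringHom : Polynomial ℤ →+* PowerSeries ℤ)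
  have hXzero : ∀ a : ℕ, t + 1 ≤ a → Φ (X ^ a) = 0 := by
    intro a ha
    have h1' : (Polynomial.coeToPowerSeries.ringHom : Polynomial ℤ →+* PowerSeries ℤ) (X ^ a)
        = (PowerSeries.X : PowerSeries ℤ) ^ (t+1) * PowerSeries.X ^ (a - (t+1)) := by
      rw [map_pow, ← pow_add, show t + 1 + (a - (t+1)) = a from by omega]
      congr 1
      exact Polynomial.coe_X
    show π _ = 0
    rw [h1']
    refine Ideal.Quotient.eq_zero_iff_mem.2 ?_
    exact Ideal.mul_mem_right _ _ (Ideal.subset_span rfl)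
  -- poch values collapse
  have hpoch : ∀ a : ℕ, t ≤ a → Φ (poch a) = Φ (poch t) := by
    intro a hta
    have : poch a = poch t * ∏ j ∈ Finset.Ico t a, (1 - X ^ (j+1)) := by
      rw [poch, poch, ← Finset.prod_range_mul_prod_Ico _ hta]
    rw [this, map_mul]
    have : Φ (∏ j ∈ Finset.Ico t a, (1 - X ^ (j+1))) = 1 := by
      rw [map_prod]
      refine Finset.prod_eq_one fun j hj => ?_
      rw [Finset.mem_Ico] at hj
      rw [map_sub, map_one, hXzero (j+1) (by omega), sub_zero]
    rw [this, mul_one]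
  have hunit : IsUnit (Φ (poch t)) := by
    have h0 : (PowerSeries.constantCoeff (R := ℤ)) ((poch t : Polynomial ℤ) : PowerSeries ℤ) = 1 := by
      rw [← PowerSeries.coeff_zero_eq_constantCoeff_apply, Polynomial.coeff_coe]
      rw [Polynomial.coeff_zero_eq_eval_zero, poch]
      simp [Polynomial.eval_prod]
    have hu : IsUnit (((poch t : Polynomial ℤ) : PowerSeries ℤ)) := by
      rw [PowerSeries.isUnit_iff_constantCoeff, h0]; exact isUnit_one
    exact hu.map π
  -- main computation
  have hmain : Φ (poch M * gb (2*M) k) = 1 := by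
    have hrel := congrArg Φ (gb_mul_poch (2*M) k hk)
    rw [map_mul, map_mul, hpoch k h1, hpoch (2*M - k) h2, hpoch (2*M) (by omega)] at hrel
    rw [map_mul, hpoch M h3]
    refine hunit.mul_left_cancel ?_
    linear_combination hrel
  have hdvd : (PowerSeries.X : PowerSeries ℤ) ^ (t+1) ∣
      ((poch M * gb (2*M) k : Polynomial ℤ) : PowerSeries ℤ) - 1 := by
    rw [← Ideal.mem_span_singleton, ← hI]
    have : π (((poch M * gb (2*M) k : Polynomial ℤ) : PowerSeries ℤ) - 1) = 0 := by
      rw [map_sub, map_one]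
      have : π (((poch M * gb (2*M) k : Polynomial ℤ) : PowerSeries ℤ)) = Φ (poch M * gb (2*M) k) := by
        rfl
      rw [this, hmain, sub_self]
    exact Ideal.Quotient.eq_zero_iff_mem.1 this
  have hc := (PowerSeries.X_pow_dvd_iff.1 hdvd) t (by omega)
  rw [map_sub, Polynomial.coeff_coe] at hc
  have : (PowerSeries.coeff (R := ℤ) t) (1 : PowerSeries ℤ) = 0 := by
    rw [PowerSeries.coeff_one, if_neg (by omega)]
  omega

end

noncomputable section

lemma q_identity (N : ℕ) :
    (∏ j ∈ range N, (1 + (X : Polynomial ℤ) ^ (2*j+1)) ^ 2)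
      = ∑ k ∈ range (2*N+1), coefE N k := by
  have h := congrArg (Polynomial.eval (1 : Polynomial ℤ)) (jtp N)
  rw [jt] at h
  rw [Polynomial.eval_prod] at h
  simp only [Polynomial.eval_mul, Polynomial.eval_add, Polynomial.eval_one, Polynomial.eval_X,
    Polynomial.eval_C, Polynomial.eval_finset_sum, Polynomial.eval_pow, one_pow, mul_one, one_mul] at h
  calc (∏ j ∈ range N, (1 + (X : Polynomial ℤ) ^ (2*j+1)) ^ 2)
      = ∏ j ∈ range N, ((1 + (X:Polynomial ℤ) ^ (2*j+1)) * (1 + X ^ (2*j+1))) := by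
        refine Finset.prod_congr rfl fun j _ => ?_; ring
    _ = ∑ k ∈ range (2*N+1), coefE N k := by rw [h]

/-- Step B: the coefficient of `q^n` in the full product vanishes for non-squares. -/
lemma coeff_F_eq_zero (n : ℕ) (hn : 0 < n) (hsq : ¬ ∃ k : ℕ, n = k ^ 2) :
    ((expand ℤ 2 (poch (n+1))) *
      ∏ j ∈ range (n+1), (1 + (X : Polynomial ℤ) ^ (2*j+1)) ^ 2).coeff n = 0 := by
  rw [q_identity (n+1), Finset.mul_sum, Polynomial.finset_sum_coeff]
  refine Finset.sum_eq_zero fun k hk => ?_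
  rw [Finset.mem_range] at hk
  have hrw : expand ℤ 2 (poch (n+1)) * coefE (n+1) k
      = X ^ (ee (n+1) k) * expand ℤ 2 (poch (n+1) * gb (2*(n+1)) k) := by
    rw [coefE, map_mul]; ring
  rw [hrw, mul_comm, Polynomial.coeff_mul_X_pow']
  split_ifs with hle
  · set a := ee (n+1) k with ha
    set m := ((k : ℤ) - (n+1)).natAbs with hm
    have ham : a = m ^ 2 := rfl
    have hcoe : ((n : ℤ) - a) = (n : ℤ) - (m:ℤ)^2 := by
      rw [ham]; push_cast; ring
    rw [Polynomial.coeff_expand (by norm_num : 0 < 2)]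
    split_ifs with hdvd
    · set t := (n - a) / 2 with htdef
      have hne : n ≠ a := by
        intro hcontra
        exact hsq ⟨m, by rw [hcontra, ham]⟩
      have ht : 1 ≤ t := by omega
      -- arithmetic bounds
      have hmk : (k : ℤ) = (n+1) + m ∨ (k : ℤ) = (n+1) - m := by
        rcases Int.natAbs_eq ((k : ℤ) - (n+1)) with h | h <;> omega
      have hmsq : 2*m ≤ m^2 + 1 := by nlinarith
      rw [← ham] at hmsq
      have h5 : 2*t + a ≤ n := by omega
      have hbound : t ≤ k ∧ t ≤ 2*(n+1) - k ∧ k ≤ 2*(n+1) ∧ t ≤ n+1 := by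
        rcases hmk with h | h
        · have hk' : k = (n+1) + m := by omega
          omega
        · have hk' : k + m = (n+1) := by omega
          omega
      obtain ⟨b1, b2, b3, b4⟩ := hbound
      exact poch_gb_coeff (n+1) k t ht b1 b2 b3 b4
    · rfl
  · rfl

end

noncomputable section
open Finset

/-- weight of a triple -/
def wgt (x : Finset ℕ × Finset ℕ × Finset ℕ) : ℕ :=
  (∑ j ∈ x.1, (2*j+2)) + (∑ j ∈ x.2.1, (2*j+1)) + (∑ j ∈ x.2.2, (2*j+1))

def toPart (x : Finset ℕ × Finset ℕ × Finset ℕ) : Finset ℕ × Finset ℕ :=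
  (x.1.image (fun j => 2*j+2) ∪ x.2.1.image (fun j => 2*j+1), x.2.2.image (fun j => 2*j+1))

def toTrip (p : Finset ℕ × Finset ℕ) : Finset ℕ × Finset ℕ × Finset ℕ :=
  ((p.1.filter (fun b => Even b)).image (fun b => b/2 - 1),
   (p.1.filter (fun b => ¬ Even b)).image (fun b => b/2),
   p.2.image (fun g => g/2))

lemma filter_even_toPart (x : Finset ℕ × Finset ℕ × Finset ℕ) :
    (toPart x).1.filter (fun b => Even b) = x.1.image (fun j => 2*j+2) := by
  rw [toPart, filter_union]
  have h1 : (x.1.image (fun j => 2*j+2)).filter (fun b => Even b) = x.1.image (fun j => 2*j+2) := by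
    refine filter_eq_self.2 fun b hb => ?_
    obtain ⟨j, _, rfl⟩ := mem_image.1 hb
    exact ⟨j+1, by omega⟩
  have h2 : (x.2.1.image (fun j => 2*j+1)).filter (fun b => Even b) = ∅ := by
    refine filter_eq_empty_iff.2 fun b hb => ?_
    obtain ⟨j, _, rfl⟩ := mem_image.1 hb
    rintro ⟨c, hc⟩; omega
  rw [h1, h2, union_empty]

lemma filter_odd_toPart (x : Finset ℕ × Finset ℕ × Finset ℕ) :
    (toPart x).1.filter (fun b => ¬ Even b) = x.2.1.image (fun j => 2*j+1) := by
  rw [toPart, filter_union]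
  have h1 : (x.1.image (fun j => 2*j+2)).filter (fun b => ¬ Even b) = ∅ := by
    refine filter_eq_empty_iff.2 fun b hb => ?_
    obtain ⟨j, _, rfl⟩ := mem_image.1 hb
    exact fun h => h ⟨j+1, by omega⟩
  have h2 : (x.2.1.image (fun j => 2*j+1)).filter (fun b => ¬ Even b) = x.2.1.image (fun j => 2*j+1) := by
    refine filter_eq_self.2 fun b hb => ?_
    obtain ⟨j, _, rfl⟩ := mem_image.1 hb
    rintro ⟨c, hc⟩; omega
  rw [h1, h2, empty_union]

lemma A1 (x : Finset ℕ × Finset ℕ × Finset ℕ) : toTrip (toPart x) = x := by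
  obtain ⟨S, T, U⟩ := x
  rw [toTrip, filter_even_toPart, filter_odd_toPart]
  refine Prod.ext ?_ (Prod.ext ?_ ?_) <;> dsimp only [toPart] <;> rw [image_image] <;>
    rw [image_congr (g := id) (fun j hj => by simp only [Function.comp_apply, id_eq]; omega),
      image_id]

lemma A2 (p : Finset ℕ × Finset ℕ) (hpos : ∀ b ∈ p.1, 0 < b) (hodd : ∀ g ∈ p.2, Odd g) :
    toPart (toTrip p) = p := by
  obtain ⟨B, G⟩ := p
  simp only [Prod.fst, Prod.snd] at hpos hodd
  rw [toTrip, toPart]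
  dsimp only
  refine Prod.ext ?_ ?_
  · dsimp only
    rw [image_image, image_image]
    have h1 : (B.filter (fun b => Even b)).image ((fun j => 2*j+2) ∘ (fun b => b/2 - 1))
        = B.filter (fun b => Even b) := by
      rw [image_congr (g := id), image_id]
      intro b hb
      simp only [mem_coe, mem_filter] at hb
      obtain ⟨hbB, c, hc⟩ := hb
      have := hpos b hbB
      simp only [Function.comp_apply, id_eq]
      omega
    have h2 : (B.filter (fun b => ¬ Even b)).image ((fun j => 2*j+1) ∘ (fun b => b/2))
        = B.filter (fun b => ¬ Even b) := by
      rw [image_congr (g := id), image_id]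
      intro b hb
      simp only [mem_coe, mem_filter] at hb
      obtain ⟨hbB, hc⟩ := hb
      have hnd : ¬ (2 ∣ b) := by
        rintro ⟨c, hcc⟩; exact hc ⟨c, by omega⟩
      simp only [Function.comp_apply, id_eq]
      omega
    rw [h1, h2, filter_union_filter_not_eq]
  · dsimp only
    rw [image_image, image_congr (g := id), image_id]
    intro g hg
    simp only [mem_coe] at hg
    obtain ⟨c, hc⟩ := hodd g hg
    simp only [Function.comp_apply, id_eq]
    omega

lemma A3 (x : Finset ℕ × Finset ℕ × Finset ℕ) :
    (toPart x).1.sum id + (toPart x).2.sum id = wgt x := by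
  obtain ⟨S, T, U⟩ := x
  have hdisj : Disjoint (S.image (fun j => 2*j+2)) (T.image (fun j => 2*j+1)) := by
    rw [disjoint_left]
    intro a ha hb
    obtain ⟨j, _, rfl⟩ := mem_image.1 ha
    obtain ⟨i, _, hi⟩ := mem_image.1 hb
    omega
  rw [toPart, wgt]
  show (S.image (fun j => 2*j+2) ∪ T.image (fun j => 2*j+1)).sum id
      + (U.image (fun j => 2*j+1)).sum id = _
  rw [sum_union hdisj, sum_image (fun a _ b _ h => by omega : ∀ a ∈ S, ∀ b ∈ S, 2*a+2 = 2*b+2 → a = b),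
    sum_image (fun a _ b _ h => by omega : ∀ a ∈ T, ∀ b ∈ T, 2*a+1 = 2*b+1 → a = b),
    sum_image (fun a _ b _ h => by omega : ∀ a ∈ U, ∀ b ∈ U, 2*a+1 = 2*b+1 → a = b)]
  rfl

lemma A4 (x : Finset ℕ × Finset ℕ × Finset ℕ) :
    ((toPart x).1.filter (fun b => Even b)).card = x.1.card := by
  rw [filter_even_toPart]
  exact card_image_of_injective _ (fun a b h => by omega)

end

section
open Finset

lemma toTrip_mem {n : ℕ} {p : Finset ℕ × Finset ℕ} (hp : IsEPartition n p) :
    toTrip p ∈ (range (n+1)).powerset ×ˢ (range (n+1)).powerset ×ˢ (range (n+1)).powerset := by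
  obtain ⟨hpos, hodd, hsum⟩ := hp
  have hble : ∀ b ∈ p.1, b ≤ n := by
    intro b hb
    have h1 : b ≤ p.1.sum id := Finset.single_le_sum (f := id) (fun i _ => Nat.zero_le _) hb
    omega
  have hgle : ∀ g ∈ p.2, g ≤ n := by
    intro g hg
    have h1 : g ≤ p.2.sum id := Finset.single_le_sum (f := id) (fun i _ => Nat.zero_le _) hg
    omega
  refine mem_product.2 ⟨?_, mem_product.2 ⟨?_, ?_⟩⟩ <;> rw [mem_powerset] <;> intro j hj
  · obtain ⟨b, hb, rfl⟩ := mem_image.1 hj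
    rw [mem_filter] at hb
    have := hble b hb.1
    rw [mem_range]; omega
  · obtain ⟨b, hb, rfl⟩ := mem_image.1 hj
    rw [mem_filter] at hb
    have := hble b hb.1
    rw [mem_range]; omega
  · obtain ⟨g, hg, rfl⟩ := mem_image.1 hj
    have := hgle g hg
    rw [mem_range]; omega

variable (n : ℕ) (par : ℕ → Prop) [DecidablePred par]

def mainEquiv :
    {p : Finset ℕ × Finset ℕ // IsEPartition n p ∧ par ((p.1.filter (fun x => Even x)).card)} ≃
    {x // x ∈ ((range (n+1)).powerset ×ˢ (range (n+1)).powerset ×ˢ (range (n+1)).powerset).filter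
        (fun x => wgt x = n ∧ par x.1.card)} where
  toFun p := ⟨toTrip p.1, by
    obtain ⟨p, hp, hpar⟩ := p
    refine mem_filter.2 ⟨toTrip_mem hp, ?_, ?_⟩
    · have h3 := A3 (toTrip p)
      rw [A2 p hp.1 hp.2.1] at h3
      rw [← h3]
      exact hp.2.2
    · have h4 := A4 (toTrip p)
      rw [A2 p hp.1 hp.2.1] at h4
      rw [← h4]
      exact hpar⟩
  invFun x := ⟨toPart x.1, by
    obtain ⟨x, hx⟩ := x
    obtain ⟨hmem, hw, hpar⟩ := mem_filter.1 hx
    refine ⟨⟨?_, ?_, ?_⟩, ?_⟩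
    · intro b hb
      rcases mem_union.1 hb with h | h <;> obtain ⟨j, _, rfl⟩ := mem_image.1 h <;> omega
    · intro g hg
      obtain ⟨j, _, rfl⟩ := mem_image.1 hg
      exact ⟨j, by omega⟩
    · rw [A3 x, hw]
    · rw [A4 x]; exact hpar⟩
  left_inv p := Subtype.ext (A2 p.1 p.2.1.1 p.2.1.2.1)
  right_inv x := Subtype.ext (A1 x.1)

end

section
open Finset Polynomial

lemma coeff_neg_pow_X (c w d : ℕ) :
    (((-1 : Polynomial ℤ)) ^ c * X ^ w).coeff d = if d = w then (-1 : ℤ) ^ c else 0 := by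
  rw [show ((-1 : Polynomial ℤ)) = C (-1 : ℤ) from by simp, ← map_pow, coeff_C_mul, coeff_X_pow]
  simp [mul_ite]

lemma expand_poch_eq (N : ℕ) :
    (expand ℤ 2 (poch N) : Polynomial ℤ)
      = ∑ S ∈ (range N).powerset, (-1 : Polynomial ℤ) ^ S.card * X ^ (∑ j ∈ S, (2*j+2)) := by
  rw [poch, map_prod]
  have h1 : ∀ j ∈ range N, expand ℤ 2 ((1 : Polynomial ℤ) - X ^ (j+1)) = -X^(2*j+2) + 1 := by
    intro j _
    rw [map_sub, map_one, expand_two_pow, show 2*(j+1) = 2*j+2 from by omega]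
    ring
  rw [Finset.prod_congr rfl h1, Finset.prod_add]
  refine Finset.sum_congr rfl fun S _ => ?_
  rw [prod_const_one, mul_one]
  have : ∀ j ∈ S, (-(X:Polynomial ℤ)^(2*j+2)) = (-1) * X^(2*j+2) := fun j _ => by ring
  rw [Finset.prod_congr rfl this, Finset.prod_mul_distrib, prod_const,
    Finset.prod_pow_eq_pow_sum]

lemma prod_one_add_eq (N : ℕ) :
    (∏ j ∈ range N, ((1 : Polynomial ℤ) + X ^ (2*j+1)))
      = ∑ T ∈ (range N).powerset, (X : Polynomial ℤ) ^ (∑ j ∈ T, (2*j+1)) := by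
  have h0 : ∀ j ∈ range N, ((1 : Polynomial ℤ) + X ^ (2*j+1)) = X ^ (2*j+1) + 1 := fun j _ => by
    ring
  rw [Finset.prod_congr rfl h0, Finset.prod_add]
  refine Finset.sum_congr rfl fun T _ => ?_
  rw [prod_const_one, mul_one, Finset.prod_pow_eq_pow_sum]

end

section
open Finset Polynomial

lemma card_filter_even_eq_odd (n : ℕ) (hn : 0 < n) (hsq : ¬ ∃ k : ℕ, n = k ^ 2) :
    ((((range (n+1)).powerset ×ˢ (range (n+1)).powerset ×ˢ (range (n+1)).powerset).filter
        (fun x => wgt x = n ∧ Even x.1.card)).card : ℤ)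
    = ((((range (n+1)).powerset ×ˢ (range (n+1)).powerset ×ˢ (range (n+1)).powerset).filter
        (fun x => wgt x = n ∧ ¬ Even x.1.card)).card : ℤ) := by
  classical
  have h0 := coeff_F_eq_zero n hn hsq
  rw [Finset.prod_pow] at h0
  set pw := (range (n+1)).powerset with hpw
  have hF : expand ℤ 2 (poch (n+1)) * (∏ j ∈ range (n+1), ((1:Polynomial ℤ) + X^(2*j+1)))^2
      = ∑ S ∈ pw, ∑ T ∈ pw, ∑ U ∈ pw, (-1 : Polynomial ℤ)^S.card * X^(wgt (S,T,U)) := by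
    rw [expand_poch_eq, prod_one_add_eq, sq, Finset.sum_mul_sum, Finset.sum_mul_sum]
    refine Finset.sum_congr rfl fun S _ => ?_
    refine Finset.sum_congr rfl fun T _ => ?_
    rw [Finset.mul_sum]
    refine Finset.sum_congr rfl fun U _ => ?_
    simp only [wgt]
    rw [← pow_add, mul_assoc, ← pow_add, ← Nat.add_assoc]
  rw [hF] at h0
  -- extract coefficient
  have h1 : (∑ S ∈ pw, ∑ T ∈ pw, ∑ U ∈ pw,
        ((-1 : Polynomial ℤ)^S.card * X^(wgt (S,T,U)))).coeff n
      = ∑ S ∈ pw, ∑ T ∈ pw, ∑ U ∈ pw,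
      (if n = wgt (S,T,U) then (-1 : ℤ)^S.card else 0) := by
    rw [Polynomial.finset_sum_coeff]
    refine Finset.sum_congr rfl fun S _ => ?_
    rw [Polynomial.finset_sum_coeff]
    refine Finset.sum_congr rfl fun T _ => ?_
    rw [Polynomial.finset_sum_coeff]
    refine Finset.sum_congr rfl fun U _ => ?_
    exact coeff_neg_pow_X _ _ _
  have h2 : ∑ S ∈ pw, ∑ T ∈ pw, ∑ U ∈ pw, (if n = wgt (S,T,U) then (-1 : ℤ)^S.card else 0)
      = ∑ x ∈ pw ×ˢ pw ×ˢ pw, (if n = wgt x then (-1 : ℤ)^x.1.card else 0) := by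
    rw [Finset.sum_product]
    refine Finset.sum_congr rfl fun S _ => ?_
    rw [Finset.sum_product]
  rw [h0] at h1
  rw [h2] at h1
  have h3 : ∑ x ∈ pw ×ˢ pw ×ˢ pw, (if n = wgt x then (-1 : ℤ)^x.1.card else 0)
      = ∑ x ∈ (pw ×ˢ pw ×ˢ pw).filter (fun x => n = wgt x), (-1 : ℤ)^x.1.card :=
    (Finset.sum_filter _ _).symm
  rw [h3] at h1
  have h4 : (pw ×ˢ pw ×ˢ pw).filter (fun x => n = wgt x)
      = (pw ×ˢ pw ×ˢ pw).filter (fun x => wgt x = n) :=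
    Finset.filter_congr fun x _ => by constructor <;> exact Eq.symm
  rw [h4] at h1
  have h5 := Finset.sum_filter_add_sum_filter_not
    ((pw ×ˢ pw ×ˢ pw).filter (fun x => wgt x = n)) (fun x => Even x.1.card)
    (fun x => (-1 : ℤ)^x.1.card)
  have h6 : ∑ x ∈ ((pw ×ˢ pw ×ˢ pw).filter (fun x => wgt x = n)).filter
      (fun x => Even x.1.card), (-1 : ℤ)^x.1.card
      = (((pw ×ˢ pw ×ˢ pw).filter (fun x => wgt x = n)).filter (fun x => Even x.1.card)).card := by
    rw [Finset.card_eq_sum_ones]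
    push_cast
    refine Finset.sum_congr rfl fun x hx => ?_
    have hev : Even x.1.card := (Finset.mem_filter.1 hx).2
    exact hev.neg_one_pow
  have h7 : ∑ x ∈ ((pw ×ˢ pw ×ˢ pw).filter (fun x => wgt x = n)).filter
      (fun x => ¬ Even x.1.card), (-1 : ℤ)^x.1.card
      = -((((pw ×ˢ pw ×ˢ pw).filter (fun x => wgt x = n)).filter
          (fun x => ¬ Even x.1.card)).card) := by
    rw [Finset.card_eq_sum_ones]
    push_cast
    rw [← Finset.sum_neg_distrib]
    refine Finset.sum_congr rfl fun x hx => ?_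
    have hod : Odd x.1.card := Nat.not_even_iff_odd.1 (Finset.mem_filter.1 hx).2
    rw [hod.neg_one_pow]
  rw [h6, h7] at h5
  rw [Finset.filter_filter, Finset.filter_filter] at h5
  linarith [h1, h5]

end

theorem stmt_3 (n : ℕ) (hn : 0 < n) (hsq : ¬ ∃ k : ℕ, n = k ^ 2) :
    Nat.card {p : Finset ℕ × Finset ℕ //
        IsEPartition n p ∧ Even ((p.1.filter (fun x => Even x)).card)} =
    Nat.card {p : Finset ℕ × Finset ℕ //
        IsEPartition n p ∧ Odd ((p.1.filter (fun x => Even x)).card)} := by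
  have he := Nat.card_congr (mainEquiv n (fun c => Even c))
  have ho := Nat.card_congr (mainEquiv n (fun c => Odd c))
  rw [he, ho, Nat.card_eq_finsetCard, Nat.card_eq_finsetCard]
  have hcount := card_filter_even_eq_odd n hn hsq
  have hconv : Finset.filter (fun x => wgt x = n ∧ Odd x.1.card)
        ((Finset.range (n+1)).powerset ×ˢ (Finset.range (n+1)).powerset ×ˢ
          (Finset.range (n+1)).powerset)
      = Finset.filter (fun x => wgt x = n ∧ ¬ Even x.1.card)
        ((Finset.range (n+1)).powerset ×ˢ (Finset.range (n+1)).powerset ×ˢ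
          (Finset.range (n+1)).powerset) :=
    Finset.filter_congr fun x _ => by rw [Nat.not_even_iff_odd]
  rw [hconv]
  exact_mod_cast hcount
end

section
/- For |q|<1, ∑_{n≥0} q^{2n+1} (q^{2n+4};q^2)_∞ (q^{2n+2};q^2)_∞ / (q^{2n+1};q^2)_∞^2 = q/(1-q)^2 = ∑_{n≥1} n q^n. -/
open scoped BigOperators

lemma qPoch_zero (a q : ℂ) : qPoch a q 0 = 1 := Finset.prod_range_zero _

lemma qPoch_succ (a q : ℂ) (n : ℕ) :
    qPoch a q (n + 1) = qPoch a q n * (1 - a * q ^ n) := Finset.prod_range_succ _ _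

lemma qPoch_one (a q : ℂ) : qPoch a q 1 = 1 - a := by
  simp [qPoch]

lemma norm_aq_lt {a q : ℂ} (ha : ‖a‖ < 1) (hq : ‖q‖ < 1) (j : ℕ) : ‖a * q ^ j‖ < 1 := by
  calc ‖a * q ^ j‖ = ‖a‖ * ‖q‖ ^ j := by rw [norm_mul, norm_pow]
  _ ≤ ‖a‖ * 1 :=
      mul_le_mul_of_nonneg_left (pow_le_one₀ (norm_nonneg q) hq.le) (norm_nonneg a)
  _ = ‖a‖ := mul_one _
  _ < 1 := ha

lemma factor_ne_zero {a q : ℂ} (ha : ‖a‖ < 1) (hq : ‖q‖ < 1) (j : ℕ) :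
    (1 : ℂ) - a * q ^ j ≠ 0 := by
  intro h
  have h1 : (1 : ℂ) = a * q ^ j := by linear_combination h
  have := norm_aq_lt ha hq j
  rw [← h1] at this
  simp at this

lemma qPoch_ne_zero {a q : ℂ} (ha : ‖a‖ < 1) (hq : ‖q‖ < 1) (n : ℕ) :
    qPoch a q n ≠ 0 :=
  Finset.prod_ne_zero_iff.2 fun j _ => factor_ne_zero ha hq j



-- geometric partial sums bounded
lemma geom_partial_le {r : ℝ} (h0 : 0 ≤ r) (h1 : r < 1) (n : ℕ) :
    ∑ j ∈ Finset.range n, r ^ j ≤ (1 - r)⁻¹ := by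
  have hr1 : r ≠ 1 := ne_of_lt h1
  rw [geom_sum_eq hr1]
  have hpos : 0 < 1 - r := by linarith
  have hrn : 0 ≤ r ^ n := pow_nonneg h0 n
  rw [div_le_iff_of_neg (by linarith : r - 1 < 0)]
  have : (1 - r)⁻¹ * (r - 1) = -1 := by field_simp; ring
  rw [this]
  linarith

lemma qPoch_norm_le {a q : ℂ} (hq : ‖q‖ < 1) (n : ℕ) :
    ‖qPoch a q n‖ ≤ Real.exp (‖a‖ * (1 - ‖q‖)⁻¹) := by
  have h1 : ‖qPoch a q n‖ ≤ ∏ j ∈ Finset.range n, (1 + ‖a‖ * ‖q‖ ^ j) := by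
    rw [qPoch, norm_prod]
    apply Finset.prod_le_prod (fun j _ => norm_nonneg _)
    intro j _
    calc ‖1 - a * q ^ j‖ ≤ ‖(1:ℂ)‖ + ‖a * q ^ j‖ := norm_sub_le _ _
    _ = 1 + ‖a‖ * ‖q‖ ^ j := by rw [norm_one, norm_mul, norm_pow]
  refine h1.trans ?_
  have h2 : ∏ j ∈ Finset.range n, (1 + ‖a‖ * ‖q‖ ^ j) ≤
      ∏ j ∈ Finset.range n, Real.exp (‖a‖ * ‖q‖ ^ j) := by
    apply Finset.prod_le_prod
    · intro j _
      positivity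
    · intro j _
      have := Real.add_one_le_exp (‖a‖ * ‖q‖ ^ j)
      linarith
  refine h2.trans ?_
  rw [← Real.exp_sum]
  apply Real.exp_le_exp.2
  rw [← Finset.mul_sum]
  apply mul_le_mul_of_nonneg_left _ (norm_nonneg a)
  exact geom_partial_le (norm_nonneg q) hq n

-- lower bound for ‖qPoch a q n‖ when ‖a‖<1 : 1-x ≥ exp(-x/(1-x)) ≥ exp(-x * (1-‖a‖)⁻¹)
lemma one_sub_ge_exp {x c : ℝ} (hx0 : 0 ≤ x) (hxc : x ≤ c) (hc : c < 1) :
    Real.exp (-(x * (1 - c)⁻¹)) ≤ 1 - x := by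
  have hc1 : 0 < 1 - c := by linarith
  have hx1 : 0 < 1 - x := by linarith
  rw [← Real.exp_log hx1]
  apply Real.exp_le_exp.2
  -- -(x * (1-c)⁻¹) ≤ log (1 - x): equivalent to exp again; use log bound:
  -- log (1-x) ≥ -x/(1-x) ≥ -x/(1-c)
  have h1 : -(x / (1 - x)) ≤ Real.log (1 - x) := by
    have := Real.add_one_le_exp (x / (1 - x))
    -- 1 + x/(1-x) = 1/(1-x)
    have h2 : 1 + x / (1 - x) = (1 - x)⁻¹ := by field_simp; ring
    have h3 : (1 - x)⁻¹ ≤ Real.exp (x / (1 - x)) := by rw [← h2]; linarith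
    have h4 : Real.log ((1 - x)⁻¹) ≤ x / (1 - x) := by
      calc Real.log ((1-x)⁻¹) ≤ Real.log (Real.exp (x / (1-x))) :=
            Real.log_le_log (by positivity) h3
      _ = x / (1 - x) := Real.log_exp _
    rw [Real.log_inv] at h4
    linarith
  refine le_trans ?_ h1
  rw [neg_le_neg_iff, div_eq_mul_inv]
  apply mul_le_mul_of_nonneg_left _ hx0
  exact inv_anti₀ hc1 (by linarith)

lemma qPoch_norm_ge {a q : ℂ} (ha : ‖a‖ < 1) (hq : ‖q‖ < 1) (n : ℕ) :
    Real.exp (-(‖a‖ * (1 - ‖q‖)⁻¹ * (1 - ‖a‖)⁻¹)) ≤ ‖qPoch a q n‖ := by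
  have h1 : ∏ j ∈ Finset.range n, (1 - ‖a‖ * ‖q‖ ^ j) ≤ ‖qPoch a q n‖ := by
    rw [qPoch]
    rw [norm_prod]
    apply Finset.prod_le_prod
    · intro j _
      have : ‖a‖ * ‖q‖ ^ j ≤ ‖a‖ * 1 :=
        mul_le_mul_of_nonneg_left (pow_le_one₀ (norm_nonneg q) hq.le) (norm_nonneg a)
      nlinarith
    · intro j _
      have h2 : ‖a * q ^ j‖ = ‖a‖ * ‖q‖ ^ j := by rw [norm_mul, norm_pow]
      calc 1 - ‖a‖ * ‖q‖ ^ j = 1 - ‖a * q ^ j‖ := by rw [h2]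
      _ = ‖(1:ℂ)‖ - ‖a * q ^ j‖ := by rw [norm_one]
      _ ≤ ‖1 - a * q ^ j‖ := norm_sub_norm_le _ _
  refine le_trans ?_ h1
  have h3 : ∀ j ∈ Finset.range n,
      Real.exp (-(‖a‖ * ‖q‖ ^ j * (1 - ‖a‖)⁻¹)) ≤ 1 - ‖a‖ * ‖q‖ ^ j := by
    intro j _
    apply one_sub_ge_exp (by positivity) _ ha
    exact mul_le_mul_of_nonneg_left (pow_le_one₀ (norm_nonneg q) hq.le) (norm_nonneg a) |>.trans
      (le_of_eq (mul_one _))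
  calc Real.exp (-(‖a‖ * (1 - ‖q‖)⁻¹ * (1 - ‖a‖)⁻¹))
      ≤ Real.exp (-((∑ j ∈ Finset.range n, ‖a‖ * ‖q‖ ^ j) * (1 - ‖a‖)⁻¹)) := by
        apply Real.exp_le_exp.2
        rw [neg_le_neg_iff]
        apply mul_le_mul_of_nonneg_right _ (by
          have : 0 < 1 - ‖a‖ := by linarith
          positivity)
        rw [← Finset.mul_sum]
        exact mul_le_mul_of_nonneg_left (geom_partial_le (norm_nonneg q) hq n) (norm_nonneg a)
  _ = ∏ j ∈ Finset.range n, Real.exp (-(‖a‖ * ‖q‖ ^ j * (1 - ‖a‖)⁻¹)) := by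
        rw [← Real.exp_sum]
        congr 1
        rw [Finset.sum_neg_distrib, ← Finset.sum_mul]
  _ ≤ ∏ j ∈ Finset.range n, (1 - ‖a‖ * ‖q‖ ^ j) := by
        apply Finset.prod_le_prod (fun j _ => (Real.exp_pos _).le) h3



lemma log_summable {a q : ℂ} (ha : ‖a‖ < 1) (hq : ‖q‖ < 1) :
    Summable (fun j : ℕ => Complex.log (1 - a * q ^ j)) := by
  have key : ∀ j : ℕ, ‖Complex.log (1 - a * q ^ j)‖ ≤
      (‖a‖ * (1 - ‖a‖)⁻¹ / 2 + 1) * (‖a‖ * ‖q‖ ^ j) := by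
    intro j
    have hnorm : ‖-(a * q ^ j)‖ = ‖a‖ * ‖q‖ ^ j := by
      rw [norm_neg, norm_mul, norm_pow]
    have hle : ‖a‖ * ‖q‖ ^ j ≤ ‖a‖ :=
      (mul_le_mul_of_nonneg_left (pow_le_one₀ (norm_nonneg q) hq.le) (norm_nonneg a)).trans
        (le_of_eq (mul_one _))
    have hlt : ‖-(a * q ^ j)‖ < 1 := by rw [hnorm]; exact lt_of_le_of_lt hle ha
    have := Complex.norm_log_one_add_le hlt
    have heq : (1 : ℂ) + -(a * q ^ j) = 1 - a * q ^ j := by ring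
    rw [heq] at this
    refine this.trans ?_
    rw [hnorm]
    have h1a : 0 < 1 - ‖a‖ := by linarith
    have hinv : (1 - ‖a‖ * ‖q‖ ^ j)⁻¹ ≤ (1 - ‖a‖)⁻¹ := by
      apply inv_anti₀ h1a
      linarith
    have hx : 0 ≤ ‖a‖ * ‖q‖ ^ j := by positivity
    calc (‖a‖ * ‖q‖ ^ j) ^ 2 * (1 - ‖a‖ * ‖q‖ ^ j)⁻¹ / 2 + ‖a‖ * ‖q‖ ^ j
        ≤ (‖a‖ * (‖a‖ * ‖q‖ ^ j)) * (1 - ‖a‖)⁻¹ / 2 + ‖a‖ * ‖q‖ ^ j := by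
          have h2 : (‖a‖ * ‖q‖ ^ j) ^ 2 ≤ ‖a‖ * (‖a‖ * ‖q‖ ^ j) := by
            rw [sq]
            exact mul_le_mul_of_nonneg_right hle hx
          have h3 : 0 ≤ (1 - ‖a‖)⁻¹ := by positivity
          have h4 : (‖a‖ * ‖q‖ ^ j) ^ 2 * (1 - ‖a‖ * ‖q‖ ^ j)⁻¹ ≤
              (‖a‖ * (‖a‖ * ‖q‖ ^ j)) * (1 - ‖a‖)⁻¹ := by
            have h5 : (0:ℝ) ≤ (1 - ‖a‖ * ‖q‖ ^ j)⁻¹ := by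
              apply inv_nonneg.2; linarith
            apply mul_le_mul h2 hinv h5 (by positivity)
          linarith
    _ = (‖a‖ * (1 - ‖a‖)⁻¹ / 2 + 1) * (‖a‖ * ‖q‖ ^ j) := by ring
  apply Summable.of_norm_bounded ?_ key
  apply Summable.mul_left
  apply Summable.mul_left
  exact summable_geometric_of_lt_one (norm_nonneg q) hq

lemma hasProd_qPochInf {a q : ℂ} (ha : ‖a‖ < 1) (hq : ‖q‖ < 1) :
    HasProd (fun j : ℕ => 1 - a * q ^ j) (qPochInf a q) := by
  have := (Complex.multipliable_of_summable_log (log_summable ha hq)).hasProd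
  exact this

lemma multipliable_qPochInf {a q : ℂ} (ha : ‖a‖ < 1) (hq : ‖q‖ < 1) :
    Multipliable (fun j : ℕ => 1 - a * q ^ j) :=
  (hasProd_qPochInf ha hq).multipliable

lemma qPochInf_ne_zero {a q : ℂ} (ha : ‖a‖ < 1) (hq : ‖q‖ < 1) :
    qPochInf a q ≠ 0 := by
  have h2 := Complex.cexp_tsum_eq_tprod (f := fun j : ℕ => 1 - a * q ^ j)
    (fun j => factor_ne_zero ha hq j)
    (log_summable ha hq)
  rw [qPochInf, ← h2]
  exact Complex.exp_ne_zero _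

lemma tendsto_qPoch {a q : ℂ} (ha : ‖a‖ < 1) (hq : ‖q‖ < 1) :
    Filter.Tendsto (fun n => qPoch a q n) Filter.atTop (nhds (qPochInf a q)) :=
  HasProd.tendsto_prod_nat (hasProd_qPochInf ha hq)

lemma qPochInf_split {a q : ℂ} (ha : ‖a‖ < 1) (hq : ‖q‖ < 1) (n : ℕ) :
    qPochInf a q = qPoch a q n * qPochInf (a * q ^ n) q := by
  have hshift : ∀ j : ℕ, (1 : ℂ) - a * q ^ (j + n) = 1 - (a * q ^ n) * q ^ j := by
    intro j
    rw [pow_add]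
    ring
  have ha' : ‖a * q ^ n‖ < 1 := by
    calc ‖a * q ^ n‖ = ‖a‖ * ‖q‖ ^ n := by rw [norm_mul, norm_pow]
    _ ≤ ‖a‖ * 1 := mul_le_mul_of_nonneg_left (pow_le_one₀ (norm_nonneg q) hq.le) (norm_nonneg a)
    _ = ‖a‖ := mul_one _
    _ < 1 := ha
  have hm : Multipliable (fun j : ℕ => (1 : ℂ) - a * q ^ (j + n)) := by
    apply (multipliable_qPochInf ha' hq).congr
    intro j
    exact (hshift j).symm
  have := Multipliable.prod_mul_tprod_nat_mul' (f := fun j : ℕ => (1 : ℂ) - a * q ^ j) (k := n) hm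
  rw [qPochInf, ← this, qPoch]
  congr 1
  rw [qPochInf]
  exact tprod_congr hshift

lemma qPochInf_peel {a q : ℂ} (ha : ‖a‖ < 1) (hq : ‖q‖ < 1) :
    qPochInf a q = (1 - a) * qPochInf (a * q) q := by
  have := qPochInf_split ha hq 1
  rw [pow_one] at this
  rw [this]
  congr 1
  simp [qPoch]



-- assumed from previous sections:

section qBinomial

variable {a Q : ℂ}

/-- the coefficient sequence of the q-binomial series -/
noncomputable def qBinCoeff (a Q : ℂ) (n : ℕ) : ℂ := qPoch a Q n / qPoch Q Q n

lemma qBinCoeff_zero (a Q : ℂ) : qBinCoeff a Q 0 = 1 := by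
  simp [qBinCoeff, qPoch_zero]

lemma qBinCoeff_rec (ha : ‖a‖ < 1) (hQ : ‖Q‖ < 1) (n : ℕ) :
    qBinCoeff a Q (n + 1) * (1 - Q * Q ^ n) = qBinCoeff a Q n * (1 - a * Q ^ n) := by
  have h1 := qPoch_ne_zero hQ hQ n
  have h3 : (1:ℂ) - Q * Q ^ n ≠ 0 := factor_ne_zero hQ hQ n
  rw [qBinCoeff, qBinCoeff, qPoch_succ a Q n, qPoch_succ Q Q n]
  rw [div_mul_eq_mul_div, div_mul_eq_mul_div, div_eq_div_iff (mul_ne_zero h1 h3) h1]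
  ring

noncomputable def qBinBound (a Q : ℂ) : ℝ :=
  Real.exp (‖a‖ * (1 - ‖Q‖)⁻¹) * Real.exp (‖Q‖ * (1 - ‖Q‖)⁻¹ * (1 - ‖Q‖)⁻¹)

lemma qBinBound_nonneg (a Q : ℂ) : 0 ≤ qBinBound a Q := by
  unfold qBinBound; positivity

lemma qBinCoeff_norm_le (hQ : ‖Q‖ < 1) (n : ℕ) :
    ‖qBinCoeff a Q n‖ ≤ qBinBound a Q := by
  rw [qBinCoeff, norm_div, qBinBound]
  have h1 := qPoch_norm_le (a := a) hQ n
  have h2 := qPoch_norm_ge hQ hQ n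
  have h3 : (0:ℝ) < Real.exp (-(‖Q‖ * (1 - ‖Q‖)⁻¹ * (1 - ‖Q‖)⁻¹)) := Real.exp_pos _
  calc ‖qPoch a Q n‖ / ‖qPoch Q Q n‖
      ≤ Real.exp (‖a‖ * (1 - ‖Q‖)⁻¹) / Real.exp (-(‖Q‖ * (1 - ‖Q‖)⁻¹ * (1 - ‖Q‖)⁻¹)) :=
        div_le_div₀ (Real.exp_pos _).le h1 h3 h2
  _ = Real.exp (‖a‖ * (1 - ‖Q‖)⁻¹) * Real.exp (‖Q‖ * (1 - ‖Q‖)⁻¹ * (1 - ‖Q‖)⁻¹) := by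
        rw [Real.exp_neg, div_eq_mul_inv, inv_inv]

lemma qBin_summable (hQ : ‖Q‖ < 1) {w : ℂ} (hw : ‖w‖ < 1) :
    Summable (fun n => qBinCoeff a Q n * w ^ n) := by
  apply Summable.of_norm_bounded (g := fun n => qBinBound a Q * ‖w‖ ^ n)
  · exact (summable_geometric_of_lt_one (norm_nonneg w) hw).mul_left _
  · intro n
    rw [norm_mul, norm_pow]
    exact mul_le_mul_of_nonneg_right (qBinCoeff_norm_le hQ n) (by positivity)

/-- the q-binomial series function -/
noncomputable def qBinF (a Q w : ℂ) : ℂ := ∑' n : ℕ, qBinCoeff a Q n * w ^ n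

lemma qBinF_sub_one_norm (hQ : ‖Q‖ < 1) {z w : ℂ} (hz : ‖z‖ < 1) (hw : ‖w‖ ≤ ‖z‖) :
    ‖qBinF a Q w - 1‖ ≤ qBinBound a Q * (1 - ‖z‖)⁻¹ * ‖w‖ := by
  have hw1 : ‖w‖ < 1 := lt_of_le_of_lt hw hz
  have hsum := qBin_summable (a := a) hQ hw1
  have hsplit := Summable.tsum_eq_zero_add hsum
  rw [qBinF]
  rw [hsplit]
  rw [qBinCoeff_zero, pow_zero, mul_one]
  rw [add_sub_cancel_left]
  have hgeom : HasSum (fun n : ℕ => qBinBound a Q * ‖w‖ * ‖w‖ ^ n)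
      (qBinBound a Q * ‖w‖ * (1 - ‖w‖)⁻¹) :=
    (hasSum_geometric_of_lt_one (norm_nonneg w) hw1).mul_left _
  have hbound : ∀ n : ℕ, ‖qBinCoeff a Q (n + 1) * w ^ (n + 1)‖ ≤
      qBinBound a Q * ‖w‖ * ‖w‖ ^ n := by
    intro n
    rw [norm_mul, norm_pow, pow_succ]
    calc ‖qBinCoeff a Q (n+1)‖ * (‖w‖ ^ n * ‖w‖) ≤ qBinBound a Q * (‖w‖ ^ n * ‖w‖) :=
          mul_le_mul_of_nonneg_right (qBinCoeff_norm_le hQ _) (by positivity)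
    _ = qBinBound a Q * ‖w‖ * ‖w‖ ^ n := by ring
  have := tsum_of_norm_bounded hgeom hbound
  refine this.trans ?_
  have h1 : (1 - ‖w‖)⁻¹ ≤ (1 - ‖z‖)⁻¹ := by
    apply inv_anti₀ (by linarith)
    linarith
  have hbn := qBinBound_nonneg a Q
  calc qBinBound a Q * ‖w‖ * (1 - ‖w‖)⁻¹ ≤ qBinBound a Q * ‖w‖ * (1 - ‖z‖)⁻¹ :=
        mul_le_mul_of_nonneg_left h1 (by positivity)
  _ = qBinBound a Q * (1 - ‖z‖)⁻¹ * ‖w‖ := by ring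

lemma qBinF_feq (ha : ‖a‖ < 1) (hQ : ‖Q‖ < 1) {w : ℂ} (hw : ‖w‖ < 1) :
    (1 - w) * qBinF a Q w = (1 - a * w) * qBinF a Q (Q * w) := by
  set c := qBinCoeff a Q with hc
  have hQw : ‖Q * w‖ < 1 := by
    rw [norm_mul]
    calc ‖Q‖ * ‖w‖ ≤ 1 * ‖w‖ := mul_le_mul_of_nonneg_right hQ.le (norm_nonneg w)
    _ = ‖w‖ := one_mul _
    _ < 1 := hw
  have S1 : HasSum (fun n => c n * w ^ n) (qBinF a Q w) := (qBin_summable hQ hw).hasSum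
  have S2 : HasSum (fun n => c n * (Q * w) ^ n) (qBinF a Q (Q * w)) :=
    (qBin_summable hQ hQw).hasSum
  -- shifted series g with g 0 = 0, g (n+1) = c n * w^(n+1)
  set g : ℕ → ℂ := fun n => Nat.casesOn n 0 (fun k => c k * w ^ (k + 1)) with hg
  set g' : ℕ → ℂ := fun n => Nat.casesOn n 0 (fun k => a * (c k * Q ^ k * w ^ (k + 1))) with hg'
  have hgshift : HasSum (fun n => g (n + 1)) (w * qBinF a Q w) := by
    apply (S1.mul_left w).congr_fun
    intro n
    show g (n + 1) = w * (c n * w ^ n)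
    show c n * w ^ (n + 1) = w * (c n * w ^ n)
    ring
  have Hg : HasSum g (w * qBinF a Q w) := by
    have := (hasSum_nat_add_iff (f := g) 1).1 hgshift
    simpa [hg] using this
  have hgshift' : HasSum (fun n => g' (n + 1)) (a * w * qBinF a Q (Q * w)) := by
    apply (S2.mul_left (a * w)).congr_fun
    intro n
    show g' (n + 1) = a * w * (c n * (Q * w) ^ n)
    show a * (c n * Q ^ n * w ^ (n + 1)) = a * w * (c n * (Q * w) ^ n)
    rw [mul_pow]
    ring
  have Hg' : HasSum g' (a * w * qBinF a Q (Q * w)) := by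
    have := (hasSum_nat_add_iff (f := g') 1).1 hgshift'
    simpa [hg'] using this
  have H := (S1.sub Hg).sub (S2.sub Hg')
  have hzero : (fun n => (c n * w ^ n - g n) - (c n * (Q * w) ^ n - g' n)) = fun _ => (0:ℂ) := by
    funext n
    cases n with
    | zero => simp [hg, hg']
    | succ k =>
      show (c (k+1) * w ^ (k+1) - c k * w ^ (k+1)) -
        (c (k+1) * (Q*w)^(k+1) - a * (c k * Q ^ k * w ^ (k+1))) = 0
      have hrec := qBinCoeff_rec ha hQ k
      rw [← hc] at hrec
      have hpow : (Q*w)^(k+1) = Q^(k+1) * w^(k+1) := mul_pow _ _ _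
      rw [hpow]
      linear_combination (w ^ (k+1)) * hrec
  rw [hzero] at H
  have := hasSum_zero.unique H
  linear_combination -this

lemma qBinF_iter (ha : ‖a‖ < 1) (hQ : ‖Q‖ < 1) {z : ℂ} (hz : ‖z‖ < 1) (m : ℕ) :
    qPoch z Q m * qBinF a Q z = qPoch (a * z) Q m * qBinF a Q (Q ^ m * z) := by
  induction m with
  | zero => simp [qPoch_zero]
  | succ m ih =>
    have hw : ‖Q ^ m * z‖ < 1 := by
      rw [norm_mul, norm_pow]
      calc ‖Q‖ ^ m * ‖z‖ ≤ 1 * ‖z‖ :=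
            mul_le_mul_of_nonneg_right (pow_le_one₀ (norm_nonneg Q) hQ.le) (norm_nonneg z)
      _ = ‖z‖ := one_mul _
      _ < 1 := hz
    have h1 := qBinF_feq ha hQ hw
    rw [qPoch_succ, qPoch_succ]
    calc qPoch z Q m * (1 - z * Q ^ m) * qBinF a Q z
        = (1 - z * Q ^ m) * (qPoch z Q m * qBinF a Q z) := by ring
    _ = (1 - z * Q ^ m) * (qPoch (a*z) Q m * qBinF a Q (Q ^ m * z)) := by rw [ih]
    _ = qPoch (a*z) Q m * ((1 - Q ^ m * z) * qBinF a Q (Q ^ m * z)) := by ring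
    _ = qPoch (a*z) Q m * ((1 - a * (Q ^ m * z)) * qBinF a Q (Q * (Q ^ m * z))) := by rw [h1]
    _ = qPoch (a*z) Q m * (1 - a * z * Q ^ m) * qBinF a Q (Q ^ (m+1) * z) := by
        rw [show Q * (Q ^ m * z) = Q ^ (m+1) * z by ring]
        ring

theorem qBinomial (ha : ‖a‖ < 1) (hQ : ‖Q‖ < 1) {z : ℂ} (hz : ‖z‖ < 1) :
    HasSum (fun n => qPoch a Q n / qPoch Q Q n * z ^ n)
      (qPochInf (a * z) Q / qPochInf z Q) := by
  have haz : ‖a * z‖ < 1 := by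
    rw [norm_mul]
    calc ‖a‖ * ‖z‖ ≤ 1 * ‖z‖ := mul_le_mul_of_nonneg_right ha.le (norm_nonneg z)
    _ = ‖z‖ := one_mul _
    _ < 1 := hz
  -- the limit
  have T1 : Filter.Tendsto (fun m => qPoch z Q m * qBinF a Q z) Filter.atTop
      (nhds (qPochInf z Q * qBinF a Q z)) :=
    (tendsto_qPoch hz hQ).mul_const _
  have TF : Filter.Tendsto (fun m => qBinF a Q (Q ^ m * z)) Filter.atTop (nhds 1) := by
    have hb : ∀ m : ℕ, ‖qBinF a Q (Q ^ m * z) - 1‖ ≤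
        (qBinBound a Q * (1 - ‖z‖)⁻¹ * ‖z‖) * ‖Q‖ ^ m := by
      intro m
      have hwz : ‖Q ^ m * z‖ ≤ ‖z‖ := by
        rw [norm_mul, norm_pow]
        calc ‖Q‖ ^ m * ‖z‖ ≤ 1 * ‖z‖ :=
              mul_le_mul_of_nonneg_right (pow_le_one₀ (norm_nonneg Q) hQ.le) (norm_nonneg z)
        _ = ‖z‖ := one_mul _
      refine (qBinF_sub_one_norm hQ hz hwz).trans ?_
      rw [norm_mul, norm_pow]
      calc qBinBound a Q * (1 - ‖z‖)⁻¹ * (‖Q‖ ^ m * ‖z‖)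
          = (qBinBound a Q * (1 - ‖z‖)⁻¹ * ‖z‖) * ‖Q‖ ^ m := by ring
      _ ≤ _ := le_refl _
    have hgeo : Filter.Tendsto (fun m : ℕ => (qBinBound a Q * (1 - ‖z‖)⁻¹ * ‖z‖) * ‖Q‖ ^ m)
        Filter.atTop (nhds 0) := by
      rw [show (0:ℝ) = (qBinBound a Q * (1 - ‖z‖)⁻¹ * ‖z‖) * 0 by ring]
      exact (tendsto_pow_atTop_nhds_zero_of_lt_one (norm_nonneg Q) hQ).const_mul _
    have h0 : Filter.Tendsto (fun m => qBinF a Q (Q ^ m * z) - 1) Filter.atTop (nhds 0) :=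
      squeeze_zero_norm hb hgeo
    have := h0.add_const 1
    simpa using this
  have T2 : Filter.Tendsto (fun m => qPoch (a*z) Q m * qBinF a Q (Q ^ m * z)) Filter.atTop
      (nhds (qPochInf (a*z) Q * 1)) :=
    (tendsto_qPoch haz hQ).mul TF
  have heq : (fun m => qPoch z Q m * qBinF a Q z) =
      (fun m => qPoch (a*z) Q m * qBinF a Q (Q ^ m * z)) := by
    funext m
    exact qBinF_iter ha hQ hz m
  rw [heq] at T1
  have hkey : qPochInf z Q * qBinF a Q z = qPochInf (a*z) Q * 1 :=
    tendsto_nhds_unique T1 T2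
  have hzne := qPochInf_ne_zero hz hQ
  have hF : qBinF a Q z = qPochInf (a*z) Q / qPochInf z Q := by
    rw [eq_div_iff hzne]
    rw [mul_one] at hkey
    linear_combination hkey
  have := (qBin_summable (a := a) hQ hz).hasSum
  rw [show (fun n => qPoch a Q n / qPoch Q Q n * z ^ n) =
    (fun n => qBinCoeff a Q n * z ^ n) from rfl, ← qBinF, hF] at *
  exact this

end qBinomial


lemma qBinCoeff_norm_le' {a Q : ℂ} (hQ : ‖Q‖ < 1) (n : ℕ) :
    ‖qPoch a Q n / qPoch Q Q n‖ ≤ qBinBound a Q := qBinCoeff_norm_le hQ n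




lemma norm_pow_lt_one' {q : ℂ} (hq : ‖q‖ < 1) (k : ℕ) (hk : k ≠ 0) : ‖q ^ k‖ < 1 := by
  rw [norm_pow]
  exact pow_lt_one₀ (norm_nonneg q) hq hk

lemma qPochInf_shift {a q : ℂ} (ha : ‖a‖ < 1) (hq : ‖q‖ < 1) (n : ℕ) :
    qPochInf (a * q ^ n) q = qPochInf a q / qPoch a q n := by
  rw [eq_div_iff (qPoch_ne_zero ha hq n), qPochInf_split ha hq n]
  ring

set_option maxHeartbeats 1000000 in
theorem stmt_11 (q : ℂ) (hq : ‖q‖ < 1) :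
    (∑' n : ℕ, q ^ (2 * n + 1) * qPochInf (q ^ (2 * n + 4)) (q ^ 2) *
        qPochInf (q ^ (2 * n + 2)) (q ^ 2) / (qPochInf (q ^ (2 * n + 1)) (q ^ 2)) ^ 2) =
      q / (1 - q) ^ 2 ∧
    q / (1 - q) ^ 2 = ∑' n : ℕ, (n : ℂ) * q ^ n := by
  refine ⟨?_, (tsum_coe_mul_geometric_of_norm_lt_one hq).symm⟩
  have hq2 : ‖q ^ 2‖ < 1 := norm_pow_lt_one' hq 2 (by norm_num)
  have hq3 : ‖q ^ 3‖ < 1 := norm_pow_lt_one' hq 3 (by norm_num)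
  have hq4 : ‖q ^ 4‖ < 1 := norm_pow_lt_one' hq 4 (by norm_num)
  -- nonvanishing
  have hP1 : qPochInf q (q ^ 2) ≠ 0 := qPochInf_ne_zero hq hq2
  have hP2 : qPochInf (q ^ 2) (q ^ 2) ≠ 0 := qPochInf_ne_zero hq2 hq2
  have hP3 : qPochInf (q ^ 3) (q ^ 2) ≠ 0 := qPochInf_ne_zero hq3 hq2
  have hP4 : qPochInf (q ^ 4) (q ^ 2) ≠ 0 := qPochInf_ne_zero hq4 hq2
  have hpi1 : ∀ n, qPoch q (q ^ 2) n ≠ 0 := qPoch_ne_zero hq hq2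
  have hpi2 : ∀ n, qPoch (q ^ 2) (q ^ 2) n ≠ 0 := qPoch_ne_zero hq2 hq2
  have hpi3 : ∀ n, qPoch (q ^ 3) (q ^ 2) n ≠ 0 := qPoch_ne_zero hq3 hq2
  have hpi4 : ∀ n, qPoch (q ^ 4) (q ^ 2) n ≠ 0 := qPoch_ne_zero hq4 hq2
  have h1q : (1 : ℂ) - q ≠ 0 := by
    intro h
    have : q = 1 := by linear_combination -h
    rw [this] at hq
    simp at hq
  -- the reduced summand
  set t : ℕ → ℂ := fun n => q ^ (2 * n + 1) * (qPoch q (q ^ 2) n) ^ 2 /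
      (qPoch (q ^ 4) (q ^ 2) n * qPoch (q ^ 2) (q ^ 2) n) with ht
  have key : ∀ n : ℕ, q ^ (2 * n + 1) * qPochInf (q ^ (2 * n + 4)) (q ^ 2) *
        qPochInf (q ^ (2 * n + 2)) (q ^ 2) / (qPochInf (q ^ (2 * n + 1)) (q ^ 2)) ^ 2
      = (qPochInf (q ^ 4) (q ^ 2) * qPochInf (q ^ 2) (q ^ 2) / (qPochInf q (q ^ 2)) ^ 2)
        * t n := by
    intro n
    have e4 : q ^ (2 * n + 4) = q ^ 4 * (q ^ 2) ^ n := by ring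
    have e2 : q ^ (2 * n + 2) = q ^ 2 * (q ^ 2) ^ n := by ring
    have e1 : q ^ (2 * n + 1) = q * (q ^ 2) ^ n := by ring
    rw [e4, e2, e1, qPochInf_shift hq4 hq2 n, qPochInf_shift hq2 hq2 n,
      qPochInf_shift hq hq2 n, ht]
    field_simp
    ring
  rw [tsum_congr key, tsum_mul_left]
  -- double sum
  set f : ℕ → ℕ → ℂ := fun n m => q ^ (2 * n + 1) *
      (qPoch q (q ^ 2) n / qPoch (q ^ 2) (q ^ 2) n) *
      ((qPoch (q ^ 3) (q ^ 2) m / qPoch (q ^ 2) (q ^ 2) m) * (q * (q ^ 2) ^ n) ^ m) with hf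
  have hz1 : ∀ n : ℕ, ‖q * (q ^ 2) ^ n‖ ≤ ‖q‖ := by
    intro n
    rw [norm_mul, norm_pow, norm_pow]
    calc ‖q‖ * (‖q‖ ^ 2) ^ n ≤ ‖q‖ * 1 :=
          mul_le_mul_of_nonneg_left
            (pow_le_one₀ (by positivity) (pow_le_one₀ (norm_nonneg q) hq.le)) (norm_nonneg q)
    _ = ‖q‖ := mul_one _
  -- inner q-binomial for fixed n
  have inner1 : ∀ n : ℕ, t n = (qPochInf q (q ^ 2) / qPochInf (q ^ 4) (q ^ 2)) *
      ∑' m, f n m := by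
    intro n
    have hz : ‖q * (q ^ 2) ^ n‖ < 1 := lt_of_le_of_lt (hz1 n) hq
    have hb := (qBinomial hq3 hq2 hz).tsum_eq
    have e1 : q ^ 3 * (q * (q ^ 2) ^ n) = q ^ 4 * (q ^ 2) ^ n := by ring
    have e2 : q * (q ^ 2) ^ n = q * (q ^ 2) ^ n := rfl
    rw [e1, qPochInf_shift hq4 hq2 n, qPochInf_shift hq hq2 n] at hb
    have : ∑' m, f n m = (q ^ (2 * n + 1) * (qPoch q (q ^ 2) n / qPoch (q ^ 2) (q ^ 2) n)) *
        ∑' m, (qPoch (q ^ 3) (q ^ 2) m / qPoch (q ^ 2) (q ^ 2) m) * (q * (q ^ 2) ^ n) ^ m := by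
      rw [← tsum_mul_left]
    rw [this, hb, ht]
    field_simp [hP1, hP4, hpi1 n, hpi2 n, hpi4 n]
  rw [tsum_congr inner1, tsum_mul_left]
  -- Fubini
  have hbound : ∀ p : ℕ × ℕ, ‖f p.1 p.2‖ ≤
      (qBinBound q (q ^ 2) * ‖q‖ ^ (2 * p.1 + 1)) * (qBinBound (q ^ 3) (q ^ 2) * ‖q‖ ^ p.2) := by
    rintro ⟨n, m⟩
    have b1 := qBinCoeff_norm_le (a := q) hq2 n
    have b2 := qBinCoeff_norm_le (a := q ^ 3) hq2 m
    have b3 : ‖q * (q ^ 2) ^ n‖ ^ m ≤ ‖q‖ ^ m :=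
      pow_le_pow_left₀ (norm_nonneg _) (hz1 n) m
    have heq : ‖f n m‖ = ‖q‖ ^ (2 * n + 1) * ‖qPoch q (q^2) n / qPoch (q^2) (q^2) n‖ *
          (‖qPoch (q^3) (q^2) m / qPoch (q^2) (q^2) m‖ * ‖q * (q ^ 2) ^ n‖ ^ m) := by
      simp only [hf]
      rw [norm_mul, norm_mul, norm_mul, norm_pow, norm_pow]
    rw [heq]
    calc ‖q‖ ^ (2 * n + 1) * ‖qPoch q (q^2) n / qPoch (q^2) (q^2) n‖ *
          (‖qPoch (q^3) (q^2) m / qPoch (q^2) (q^2) m‖ * ‖q * (q ^ 2) ^ n‖ ^ m)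
        ≤ ‖q‖ ^ (2 * n + 1) * qBinBound q (q ^ 2) *
          (qBinBound (q ^ 3) (q ^ 2) * ‖q‖ ^ m) := by
          apply mul_le_mul
          · exact mul_le_mul_of_nonneg_left b1 (by positivity)
          · exact mul_le_mul b2 b3 (by positivity) (qBinBound_nonneg _ _)
          · positivity
          · exact mul_nonneg (by positivity) (qBinBound_nonneg _ _)
    _ = (qBinBound q (q ^ 2) * ‖q‖ ^ (2 * n + 1)) * (qBinBound (q ^ 3) (q ^ 2) * ‖q‖ ^ m) := by
          ring
  have hsumgeo1 : Summable (fun n : ℕ => qBinBound q (q ^ 2) * ‖q‖ ^ (2 * n + 1)) := by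
    have : ∀ n : ℕ, qBinBound q (q ^ 2) * ‖q‖ ^ (2 * n + 1) =
        (qBinBound q (q ^ 2) * ‖q‖) * (‖q‖ ^ 2) ^ n := by
      intro n; ring
    rw [funext this]
    apply Summable.mul_left
    apply summable_geometric_of_lt_one (by positivity)
    calc ‖q‖ ^ 2 = ‖q ^ 2‖ := (norm_pow q 2).symm
    _ < 1 := hq2
  have hsumgeo2 : Summable (fun m : ℕ => qBinBound (q ^ 3) (q ^ 2) * ‖q‖ ^ m) :=
    (summable_geometric_of_lt_one (norm_nonneg q) hq).mul_left _
  have hFsummable : Summable (Function.uncurry f) := by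
    apply Summable.of_norm_bounded ?_ (fun p => hbound p)
    exact hsumgeo1.mul_of_nonneg hsumgeo2
      (fun n => mul_nonneg (qBinBound_nonneg _ _) (by positivity))
      (fun m => mul_nonneg (qBinBound_nonneg _ _) (by positivity))
  have hswap : ∑' n, ∑' m, f n m = ∑' m, ∑' n, f n m := (Summable.tsum_comm hFsummable).symm
  rw [hswap]
  -- inner sum over n for fixed m
  have inner2 : ∀ m : ℕ, ∑' n, f n m =
      q ^ (m + 1) * (qPochInf (q ^ 3) (q ^ 2) / qPochInf (q ^ 2) (q ^ 2)) := by
    intro m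
    have hz : ‖(q ^ 2) ^ (m + 1)‖ < 1 := by
      rw [norm_pow]
      exact pow_lt_one₀ (norm_nonneg _) hq2 (Nat.succ_ne_zero m)
    have hb := (qBinomial hq hq2 hz).tsum_eq
    have e1 : q * (q ^ 2) ^ (m + 1) = q ^ 3 * (q ^ 2) ^ m := by ring
    have e2 : ((q ^ 2) : ℂ) ^ (m + 1) = q ^ 2 * (q ^ 2) ^ m := by ring
    rw [e1, e2, qPochInf_shift hq3 hq2 m, qPochInf_shift hq2 hq2 m] at hb
    have hre : ∀ n : ℕ, f n m = ((qPoch (q ^ 3) (q ^ 2) m / qPoch (q ^ 2) (q ^ 2) m) *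
        q ^ (m + 1)) * ((qPoch q (q ^ 2) n / qPoch (q ^ 2) (q ^ 2) n) *
        (q ^ 2 * (q ^ 2) ^ m) ^ n) := by
      intro n
      simp only [hf]
      have hpp : ((q * (q ^ 2) ^ n) ^ m : ℂ) = q ^ m * ((q ^ 2) ^ m) ^ n := by
        rw [mul_pow, ← pow_mul, ← pow_mul, Nat.mul_comm n m]
        ring
      have hpp2 : ((q ^ 2 * (q ^ 2) ^ m : ℂ)) ^ n = (q ^ 2) ^ n * ((q ^ 2) ^ m) ^ n :=
        mul_pow _ _ _
      rw [hpp, hpp2]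
      ring
    rw [tsum_congr hre, tsum_mul_left, hb]
    field_simp [hpi2 m, hpi3 m, hP2]
  rw [tsum_congr inner2, tsum_mul_right]
  -- geometric series
  have hgeo : ∑' m : ℕ, q ^ (m + 1) = q * (1 - q)⁻¹ := by
    have : ∀ m : ℕ, q ^ (m + 1) = q * q ^ m := by intro m; ring
    rw [funext this, tsum_mul_left, tsum_geometric_of_norm_lt_one hq]
  rw [hgeo]
  -- final algebra
  have hpeel : qPochInf q (q ^ 2) = (1 - q) * qPochInf (q ^ 3) (q ^ 2) := by
    have := qPochInf_peel hq hq2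
    rw [show q * q ^ 2 = q ^ 3 by ring] at this
    exact this
  rw [hpeel]
  field_simp
end

section
/- For |q|<1, ∑_{n≥0} q^{2n+1} (q^{2n+6};q^2)_∞ (q^{2n+2};q^2)_∞ / ((q^{2n+3};q^2)_∞ (q^{2n+1};q^2)_∞) = q/((1-q)(1-q^3)) = ∑_{n≥1} ⌊(n+2)/3⌋ q^n. -/
open scoped BigOperators

open scoped Topology
open Complex Filter Finset

set_option maxHeartbeats 1000000

namespace QAux

variable {a p z : ℂ}

lemma one_sub_ne_zero (h : ‖z‖ < 1) : (1 : ℂ) - z ≠ 0 := by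
  intro h0
  have hz : z = 1 := by linear_combination -h0
  rw [hz] at h; simp at h

lemma norm_term_le (j : ℕ) (hp : ‖p‖ < 1) : ‖a * p ^ j‖ ≤ ‖a‖ := by
  rw [norm_mul, norm_pow]
  exact mul_le_of_le_one_right (norm_nonneg a) (pow_le_one₀ (norm_nonneg p) hp.le)

lemma norm_term_lt (ha : ‖a‖ < 1) (hp : ‖p‖ < 1) (j : ℕ) : ‖a * p ^ j‖ < 1 :=
  lt_of_le_of_lt (norm_term_le j hp) ha

lemma term_ne_zero (ha : ‖a‖ < 1) (hp : ‖p‖ < 1) (j : ℕ) : 1 - a * p ^ j ≠ 0 :=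
  one_sub_ne_zero (norm_term_lt ha hp j)

lemma qPoch_ne_zero (ha : ‖a‖ < 1) (hp : ‖p‖ < 1) (n : ℕ) : qPoch a p n ≠ 0 :=
  Finset.prod_ne_zero_iff.2 fun j _ => term_ne_zero ha hp j

lemma summable_norm_log (ha : ‖a‖ < 1) (hp : ‖p‖ < 1) :
    Summable (fun j : ℕ => ‖Complex.log (1 - a * p ^ j)‖) := by
  have h0 : Tendsto (fun j : ℕ => ‖a * p ^ j‖) atTop (𝓝 0) := by
    have := (tendsto_pow_atTop_nhds_zero_of_norm_lt_one hp).const_mul a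
    simpa using this.norm
  have hev : ∀ᶠ j : ℕ in atTop, ‖a * p ^ j‖ ≤ 1 / 2 :=
    (h0.eventually_lt_const (by norm_num : (0:ℝ) < 1/2)).mono fun j hj => hj.le
  have hg : Summable (fun j : ℕ => 3 / 2 * (‖a‖ * ‖p‖ ^ j)) :=
    ((summable_geometric_of_lt_one (norm_nonneg p) hp).mul_left ‖a‖).mul_left _
  apply Summable.of_norm_bounded_eventually hg
  rw [Nat.cofinite_eq_atTop]
  filter_upwards [hev] with j hj
  have h1 : ‖Complex.log (1 - a * p ^ j)‖ ≤ 3 / 2 * ‖a * p ^ j‖ := by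
    have := Complex.norm_log_one_add_half_le_self (z := -(a * p ^ j)) (by simpa using hj)
    simpa [sub_eq_add_neg] using this
  rw [Real.norm_of_nonneg (norm_nonneg _)]
  refine h1.trans ?_
  rw [norm_mul, norm_pow]

lemma summable_log (ha : ‖a‖ < 1) (hp : ‖p‖ < 1) :
    Summable (fun j : ℕ => Complex.log (1 - a * p ^ j)) :=
  (summable_norm_log ha hp).of_norm

lemma qPochInf_eq_exp (ha : ‖a‖ < 1) (hp : ‖p‖ < 1) :
    qPochInf a p = Complex.exp (∑' j : ℕ, Complex.log (1 - a * p ^ j)) := by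
  have := Complex.cexp_tsum_eq_tprod (f := fun j : ℕ => 1 - a * p ^ j)
    (fun j => term_ne_zero ha hp j) (summable_log ha hp)
  exact this.symm

lemma qPochInf_ne_zero (ha : ‖a‖ < 1) (hp : ‖p‖ < 1) : qPochInf a p ≠ 0 := by
  rw [qPochInf_eq_exp ha hp]; exact Complex.exp_ne_zero _

lemma multipliable (ha : ‖a‖ < 1) (hp : ‖p‖ < 1) :
    Multipliable (fun j : ℕ => 1 - a * p ^ j) :=
  Complex.multipliable_of_summable_log (summable_log ha hp)

lemma norm_shift_le (ha : ‖a‖ < 1) (hp : ‖p‖ < 1) (k : ℕ) : ‖a * p ^ k‖ < 1 :=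
  norm_term_lt ha hp k

lemma qPochInf_split (ha : ‖a‖ < 1) (hp : ‖p‖ < 1) (k : ℕ) :
    qPochInf a p = qPoch a p k * qPochInf (a * p ^ k) p := by
  have hshift : ∀ j : ℕ, Complex.log (1 - a * p ^ (j + k)) =
      Complex.log (1 - a * p ^ k * p ^ j) := by
    intro j; rw [pow_add]; ring_nf
  rw [qPochInf_eq_exp ha hp, qPochInf_eq_exp (norm_shift_le ha hp k) hp,
    ← Summable.sum_add_tsum_nat_add k (summable_log ha hp), Complex.exp_add]
  congr 1
  · rw [qPoch, Complex.exp_sum]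
    exact Finset.prod_congr rfl fun j _ => Complex.exp_log (term_ne_zero ha hp j)
  · exact congrArg _ (tsum_congr hshift)

lemma norm_qPochInf_le (ha : ‖a‖ < 1) (hp : ‖p‖ < 1) :
    ‖qPochInf a p‖ ≤ Real.exp (∑' j : ℕ, ‖Complex.log (1 - a * p ^ j)‖) := by
  rw [qPochInf_eq_exp ha hp, Complex.norm_exp]
  apply Real.exp_le_exp.2
  refine (le_abs_self _).trans ?_
  exact (Complex.abs_re_le_norm _).trans
    (norm_tsum_le_tsum_norm (summable_norm_log ha hp))

lemma qPochInf_lower (ha : ‖a‖ < 1) (hp : ‖p‖ < 1) :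
    Real.exp (-(∑' j : ℕ, ‖Complex.log (1 - a * p ^ j)‖)) ≤ ‖qPochInf a p‖ := by
  rw [qPochInf_eq_exp ha hp, Complex.norm_exp]
  apply Real.exp_le_exp.2
  have h1 : ‖(∑' j : ℕ, Complex.log (1 - a * p ^ j))‖ ≤
      ∑' j : ℕ, ‖Complex.log (1 - a * p ^ j)‖ := norm_tsum_le_tsum_norm (summable_norm_log ha hp)
  have h2 : -‖(∑' j : ℕ, Complex.log (1 - a * p ^ j))‖ ≤
      (∑' j : ℕ, Complex.log (1 - a * p ^ j)).re := by
    refine le_trans ?_ (neg_abs_le _)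
    simp only [neg_le_neg_iff]
    exact Complex.abs_re_le_norm _
  linarith


noncomputable def cfun (a p : ℂ) (n : ℕ) : ℂ := qPoch a p n / qPoch p p n

noncomputable def Mlog (a p : ℂ) : ℝ := ∑' j : ℕ, ‖Complex.log (1 - a * p ^ j)‖

noncomputable def Cb (a p : ℂ) : ℝ :=
  Real.exp (‖a‖ / (1 - ‖p‖)) * (Real.exp (-(Mlog p p)) * ‖qPochInf p p‖)⁻¹

lemma norm_qPoch_le (hp : ‖p‖ < 1) (n : ℕ) :
    ‖qPoch a p n‖ ≤ Real.exp (‖a‖ / (1 - ‖p‖)) := by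
  rw [qPoch, norm_prod]
  calc ∏ j ∈ range n, ‖1 - a * p ^ j‖
      ≤ ∏ j ∈ range n, Real.exp (‖a‖ * ‖p‖ ^ j) := by
        apply Finset.prod_le_prod (fun j _ => norm_nonneg _)
        intro j _
        calc ‖1 - a * p ^ j‖ ≤ ‖(1:ℂ)‖ + ‖a * p ^ j‖ := norm_sub_le _ _
        _ = ‖a‖ * ‖p‖ ^ j + 1 := by rw [norm_mul, norm_pow, norm_one]; ring
        _ ≤ Real.exp (‖a‖ * ‖p‖ ^ j) := Real.add_one_le_exp _
    _ = Real.exp (∑ j ∈ range n, ‖a‖ * ‖p‖ ^ j) := by rw [Real.exp_sum]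
    _ ≤ Real.exp (‖a‖ / (1 - ‖p‖)) := by
        apply Real.exp_le_exp.2
        rw [← Finset.mul_sum, div_eq_mul_inv]
        apply mul_le_mul_of_nonneg_left _ (norm_nonneg a)
        rw [← tsum_geometric_of_lt_one (norm_nonneg p) hp]
        exact Summable.sum_le_tsum _ (fun j _ => pow_nonneg (norm_nonneg p) j)
          (summable_geometric_of_lt_one (norm_nonneg p) hp)

lemma Mlog_shift_le (ha : ‖a‖ < 1) (hp : ‖p‖ < 1) (k : ℕ) : Mlog (a * p ^ k) p ≤ Mlog a p := by
  apply Summable.tsum_le_tsum_of_inj (fun j => j + k) (add_left_injective k)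
    (fun c _ => norm_nonneg _) _ (summable_norm_log (norm_shift_le ha hp k) hp)
    (summable_norm_log ha hp)
  intro j
  apply le_of_eq
  congr 2
  rw [pow_add]
  ring

lemma qPoch_lower' (ha : ‖a‖ < 1) (hp : ‖p‖ < 1) (n : ℕ) :
    Real.exp (-(Mlog a p)) * ‖qPochInf a p‖ ≤ ‖qPoch a p n‖ := by
  have hsplit := qPochInf_split ha hp n
  have h1 : ‖qPochInf (a * p ^ n) p‖ ≤ Real.exp (Mlog a p) :=
    (norm_qPochInf_le (norm_shift_le ha hp n) hp).trans
      (Real.exp_le_exp.2 (Mlog_shift_le ha hp n))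
  have h2 : ‖qPochInf a p‖ = ‖qPoch a p n‖ * ‖qPochInf (a * p ^ n) p‖ := by
    rw [hsplit, norm_mul]
  have hpos : (0:ℝ) < Real.exp (Mlog a p) := Real.exp_pos _
  calc Real.exp (-(Mlog a p)) * ‖qPochInf a p‖
      = ‖qPoch a p n‖ * ((Real.exp (Mlog a p))⁻¹ * ‖qPochInf (a * p ^ n) p‖) := by
        rw [h2, Real.exp_neg]; ring
    _ ≤ ‖qPoch a p n‖ * 1 := by
        apply mul_le_mul_of_nonneg_left _ (norm_nonneg _)
        rw [inv_mul_le_iff₀ hpos, mul_one]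
        exact h1
    _ = ‖qPoch a p n‖ := mul_one _

lemma denom_pos (hp : ‖p‖ < 1) : 0 < Real.exp (-(Mlog p p)) * ‖qPochInf p p‖ :=
  mul_pos (Real.exp_pos _) (norm_pos_iff.2 (qPochInf_ne_zero hp hp))

lemma Cb_nonneg (hp : ‖p‖ < 1) : 0 ≤ Cb a p :=
  mul_nonneg (Real.exp_pos _).le (inv_nonneg.2 (denom_pos hp).le)

lemma norm_cfun_le (hp : ‖p‖ < 1) (n : ℕ) : ‖cfun a p n‖ ≤ Cb a p := by
  rw [cfun, norm_div, Cb, div_eq_mul_inv]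
  apply mul_le_mul (norm_qPoch_le hp n) _ (inv_nonneg.2 (norm_nonneg _)) (Real.exp_pos _).le
  exact inv_anti₀ (denom_pos hp) (qPoch_lower' hp hp n)

lemma qPoch_p_ne_zero (hp : ‖p‖ < 1) (n : ℕ) : qPoch p p n ≠ 0 := qPoch_ne_zero hp hp n

lemma cfun_zero : cfun a p 0 = 1 := by simp [cfun, qPoch]

lemma cfun_rec (hp : ‖p‖ < 1) (n : ℕ) :
    cfun a p (n + 1) * (1 - p * p ^ n) = cfun a p n * (1 - a * p ^ n) := by
  rw [cfun, cfun, qPoch, qPoch, Finset.prod_range_succ, Finset.prod_range_succ, ← qPoch, ← qPoch]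
  have h1 := qPoch_p_ne_zero hp n
  have h2 : (1 : ℂ) - p * p ^ n ≠ 0 := by
    apply one_sub_ne_zero
    calc ‖p * p ^ n‖ ≤ ‖p‖ := norm_term_le n hp
    _ < 1 := hp
  rw [div_mul_eq_mul_div, div_mul_eq_mul_div, div_eq_div_iff (mul_ne_zero h1 h2) h1]
  ring

lemma summable_cfun (hp : ‖p‖ < 1) (hz : ‖z‖ < 1) :
    Summable (fun n : ℕ => cfun a p n * z ^ n) := by
  apply Summable.of_norm_bounded (g := fun n => Cb a p * ‖z‖ ^ n)
  · exact (summable_geometric_of_lt_one (norm_nonneg z) hz).mul_left _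
  · intro n
    rw [norm_mul, norm_pow]
    exact mul_le_mul_of_nonneg_right (norm_cfun_le hp n) (pow_nonneg (norm_nonneg z) n)

lemma summable_cfun_succ (hp : ‖p‖ < 1) (hz : ‖z‖ < 1) :
    Summable (fun n : ℕ => cfun a p (n + 1) * z ^ (n + 1)) :=
  (summable_nat_add_iff (f := fun n : ℕ => cfun a p n * z ^ n) 1).2 (summable_cfun hp hz)

lemma tsum_split_zero (hp : ‖p‖ < 1) (hz : ‖z‖ < 1) :
    (∑' n : ℕ, cfun a p n * z ^ n) = 1 + ∑' n : ℕ, cfun a p (n + 1) * z ^ (n + 1) := by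
  rw [Summable.tsum_eq_zero_add (summable_cfun hp hz), cfun_zero, pow_zero, mul_one]

lemma qbinom_step (hp : ‖p‖ < 1) (hz : ‖z‖ < 1) :
    (∑' n : ℕ, cfun a p n * z ^ n) * (1 - z) =
      (∑' n : ℕ, cfun a p n * (p * z) ^ n) * (1 - a * z) := by
  have hpz : ‖p * z‖ < 1 := by
    calc ‖p * z‖ = ‖p‖ * ‖z‖ := norm_mul _ _
    _ ≤ 1 * ‖z‖ := mul_le_mul_of_nonneg_right hp.le (norm_nonneg z)
    _ < 1 := by rwa [one_mul]
  have hmul : ∀ w : ℂ, ‖w‖ < 1 →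
      (∑' n : ℕ, cfun a p n * w ^ n) * w = ∑' n : ℕ, cfun a p n * w ^ (n + 1) := by
    intro w hw
    rw [← tsum_mul_right]
    exact tsum_congr fun n => by ring
  have hS1 := summable_cfun_succ (a := a) hp hz
  have hS0 : Summable (fun n : ℕ => cfun a p n * z ^ (n + 1)) :=
    ((summable_cfun (a := a) hp hz).mul_right z).congr (fun n => by ring)
  have hS1' := summable_cfun_succ (a := a) hp hpz
  have hS0' : Summable (fun n : ℕ => cfun a p n * (p * z) ^ (n + 1)) :=
    ((summable_cfun (a := a) hp hpz).mul_right (p * z)).congr (fun n => by ring)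
  have e1 : (∑' n : ℕ, cfun a p n * z ^ n) * (1 - z) =
      1 + ∑' n : ℕ, (cfun a p (n + 1) - cfun a p n) * z ^ (n + 1) := by
    rw [mul_sub, mul_one, hmul z hz, tsum_split_zero hp hz, add_sub_assoc]
    congr 1
    rw [← Summable.tsum_sub hS1 hS0]
    exact tsum_congr fun n => by ring
  have hmul2 : (∑' n : ℕ, cfun a p n * (p * z) ^ n) * (a * z) =
      ∑' n : ℕ, cfun a p n * (a * p ^ n) * z ^ (n + 1) := by
    rw [← tsum_mul_right]
    exact tsum_congr fun n => by ring
  have hB : Summable (fun n : ℕ => cfun a p n * (a * p ^ n) * z ^ (n + 1)) :=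
    ((summable_cfun (a := a) hp hpz).mul_right (a * z)).congr (fun n => by ring)
  have hA : Summable (fun n : ℕ => cfun a p (n + 1) * (p * p ^ n) * z ^ (n + 1)) :=
    hS1'.congr (fun n => by ring)
  have e2 : (∑' n : ℕ, cfun a p n * (p * z) ^ n) * (1 - a * z) =
      1 + ∑' n : ℕ, (cfun a p (n + 1) * (p * p ^ n) - cfun a p n * (a * p ^ n)) * z ^ (n + 1) := by
    rw [mul_sub, mul_one, hmul2, tsum_split_zero hp hpz, add_sub_assoc]
    congr 1
    have e3 : (∑' n : ℕ, cfun a p (n + 1) * (p * z) ^ (n + 1)) =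
        ∑' n : ℕ, cfun a p (n + 1) * (p * p ^ n) * z ^ (n + 1) :=
      tsum_congr fun n => by ring
    rw [e3, ← Summable.tsum_sub hA hB]
    exact tsum_congr fun n => by ring
  rw [e1, e2]
  congr 1
  apply tsum_congr
  intro n
  have := cfun_rec (a := a) hp n
  have expand : cfun a p (n+1) - cfun a p n = cfun a p (n+1) * (p * p ^ n) - cfun a p n * (a * p ^ n) := by
    linear_combination this
  rw [expand]

lemma qbinom_iter (hp : ‖p‖ < 1) (hz : ‖z‖ < 1) (K : ℕ) :
    (∑' n : ℕ, cfun a p n * z ^ n) * qPoch z p K =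
      qPoch (a * z) p K * (∑' n : ℕ, cfun a p n * (p ^ K * z) ^ n) := by
  induction K with
  | zero => simp [qPoch]
  | succ K ih =>
    have hzK : ‖p ^ K * z‖ < 1 := by
      calc ‖p ^ K * z‖ = ‖p ^ K‖ * ‖z‖ := norm_mul _ _
      _ ≤ 1 * ‖z‖ := by
          apply mul_le_mul_of_nonneg_right _ (norm_nonneg z)
          rw [norm_pow]
          exact pow_le_one₀ (norm_nonneg p) hp.le
      _ < 1 := by rwa [one_mul]
    have hstep := qbinom_step (a := a) hp hzK
    rw [qPoch, qPoch, Finset.prod_range_succ, Finset.prod_range_succ, ← qPoch, ← qPoch,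
      ← mul_assoc, ih]
    have h1 : (1 : ℂ) - z * p ^ K = 1 - p ^ K * z := by ring
    have h2 : (1 : ℂ) - a * z * p ^ K = 1 - a * (p ^ K * z) := by ring
    rw [h1, h2, mul_assoc, hstep]
    have h3 : ∀ n : ℕ, cfun a p n * (p * (p ^ K * z)) ^ n = cfun a p n * (p ^ (K+1) * z) ^ n := by
      intro n
      congr 2
      rw [pow_succ]
      ring
    rw [tsum_congr h3]
    ring

lemma norm_tsum_sub_one_le (hp : ‖p‖ < 1) (hz : ‖z‖ < 1) {w : ℂ} (hw : ‖w‖ ≤ ‖z‖) :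
    ‖(∑' n : ℕ, cfun a p n * w ^ n) - 1‖ ≤ Cb a p * (1 - ‖z‖)⁻¹ * ‖w‖ := by
  have hw1 : ‖w‖ < 1 := lt_of_le_of_lt hw hz
  rw [tsum_split_zero (a := a) hp hw1, add_sub_cancel_left]
  have hnorm : Summable (fun n : ℕ => Cb a p * ‖w‖ ^ (n + 1)) := by
    apply Summable.congr (((summable_geometric_of_lt_one (norm_nonneg w) hw1).mul_left
      (Cb a p * ‖w‖)))
    intro n
    rw [pow_succ]
    ring
  have hb : ∀ n : ℕ, ‖cfun a p (n + 1) * w ^ (n + 1)‖ ≤ Cb a p * ‖w‖ ^ (n + 1) := by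
    intro n
    rw [norm_mul, norm_pow]
    exact mul_le_mul_of_nonneg_right (norm_cfun_le hp (n + 1)) (pow_nonneg (norm_nonneg w) _)
  have hns : Summable (fun n : ℕ => ‖cfun a p (n + 1) * w ^ (n + 1)‖) :=
    Summable.of_nonneg_of_le (fun n => norm_nonneg _) hb hnorm
  calc ‖∑' n : ℕ, cfun a p (n + 1) * w ^ (n + 1)‖
      ≤ ∑' n : ℕ, ‖cfun a p (n + 1) * w ^ (n + 1)‖ := norm_tsum_le_tsum_norm hns
    _ ≤ ∑' n : ℕ, Cb a p * ‖w‖ ^ (n + 1) := Summable.tsum_le_tsum hb hns hnorm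
    _ = Cb a p * ‖w‖ * ∑' n : ℕ, ‖w‖ ^ n := by
        rw [← tsum_mul_left]
        exact tsum_congr fun n => by rw [pow_succ]; ring
    _ = Cb a p * ‖w‖ * (1 - ‖w‖)⁻¹ := by rw [tsum_geometric_of_lt_one (norm_nonneg w) hw1]
    _ ≤ Cb a p * (1 - ‖z‖)⁻¹ * ‖w‖ := by
        rw [mul_assoc, mul_assoc]
        apply mul_le_mul_of_nonneg_left _ (Cb_nonneg hp)
        rw [mul_comm]
        apply mul_le_mul_of_nonneg_right _ (norm_nonneg w)
        exact inv_anti₀ (by linarith) (by linarith)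

lemma qbinom (ha : ‖a‖ < 1) (hp : ‖p‖ < 1) (hz : ‖z‖ < 1) :
    (∑' n : ℕ, cfun a p n * z ^ n) * qPochInf z p = qPochInf (a * z) p := by
  have haz : ‖a * z‖ < 1 := by
    calc ‖a * z‖ = ‖a‖ * ‖z‖ := norm_mul _ _
    _ ≤ 1 * ‖z‖ := mul_le_mul_of_nonneg_right ha.le (norm_nonneg z)
    _ < 1 := by rwa [one_mul]
  have t1 : Tendsto (fun K => (∑' n : ℕ, cfun a p n * z ^ n) * qPoch z p K) atTop
      (𝓝 ((∑' n : ℕ, cfun a p n * z ^ n) * qPochInf z p)) :=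
    ((multipliable hz hp).hasProd.tendsto_prod_nat).const_mul _
  have t2 : Tendsto (fun K => qPoch (a * z) p K) atTop (𝓝 (qPochInf (a * z) p)) :=
    (multipliable haz hp).hasProd.tendsto_prod_nat
  have t3 : Tendsto (fun K => (∑' n : ℕ, cfun a p n * (p ^ K * z) ^ n)) atTop (𝓝 1) := by
    have key : Tendsto (fun K => (∑' n : ℕ, cfun a p n * (p ^ K * z) ^ n) - 1) atTop (𝓝 0) := by
      apply squeeze_zero_norm (a := fun K => Cb a p * (1 - ‖z‖)⁻¹ * (‖z‖ * ‖p‖ ^ K))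
      · intro K
        have hwle : ‖p ^ K * z‖ ≤ ‖z‖ := by
          rw [norm_mul, norm_pow]
          apply mul_le_of_le_one_left (norm_nonneg z)
          exact pow_le_one₀ (norm_nonneg p) hp.le
        have := norm_tsum_sub_one_le (a := a) hp hz hwle
        calc ‖(∑' n : ℕ, cfun a p n * (p ^ K * z) ^ n) - 1‖
            ≤ Cb a p * (1 - ‖z‖)⁻¹ * ‖p ^ K * z‖ := this
          _ = Cb a p * (1 - ‖z‖)⁻¹ * (‖z‖ * ‖p‖ ^ K) := by rw [norm_mul, norm_pow]; ring
      · rw [show (0:ℝ) = Cb a p * (1 - ‖z‖)⁻¹ * (‖z‖ * 0) by ring]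
        apply Tendsto.const_mul
        exact (tendsto_pow_atTop_nhds_zero_of_lt_one (norm_nonneg p) hp).const_mul _
    have := key.add_const 1
    simpa using this
  have heq : (fun K => (∑' n : ℕ, cfun a p n * z ^ n) * qPoch z p K) =
      fun K => qPoch (a * z) p K * (∑' n : ℕ, cfun a p n * (p ^ K * z) ^ n) :=
    funext fun K => qbinom_iter hp hz K
  have := tendsto_nhds_unique (heq ▸ t1) (t2.mul t3)
  rw [this, mul_one]

section App

variable {q : ℂ}

lemma npow (hq : ‖q‖ < 1) (k : ℕ) (hk : k ≠ 0) : ‖q ^ k‖ < 1 := by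
  rw [norm_pow]
  exact pow_lt_one₀ (norm_nonneg q) hq hk

lemma inf_shift (hq : ‖q‖ < 1) (k : ℕ) (hk : k ≠ 0) (n : ℕ) :
    qPochInf (q ^ k * (q ^ 2) ^ n) (q ^ 2) =
      qPochInf (q ^ k) (q ^ 2) / qPoch (q ^ k) (q ^ 2) n := by
  rw [eq_div_iff (qPoch_ne_zero (npow hq k hk) (npow hq 2 two_ne_zero) n), mul_comm]
  exact (qPochInf_split (npow hq k hk) (npow hq 2 two_ne_zero) n).symm

lemma inf_ne_zero (hq : ‖q‖ < 1) (k : ℕ) (hk : k ≠ 0) :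
    qPochInf (q ^ k) (q ^ 2) ≠ 0 :=
  qPochInf_ne_zero (npow hq k hk) (npow hq 2 two_ne_zero)

lemma shift_ne_zero (hq : ‖q‖ < 1) (k : ℕ) (hk : k ≠ 0) (n : ℕ) :
    qPochInf (q ^ k * (q ^ 2) ^ n) (q ^ 2) ≠ 0 :=
  qPochInf_ne_zero (norm_term_lt (npow hq k hk) (npow hq 2 two_ne_zero) n)
    (npow hq 2 two_ne_zero)

-- the two q-binomial specializations
lemma qbinom3 (hq : ‖q‖ < 1) (n : ℕ) :
    qPochInf (q ^ 6 * (q ^ 2) ^ n) (q ^ 2) =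
      (∑' m : ℕ, cfun (q ^ 3) (q ^ 2) m * (q ^ 3 * (q ^ 2) ^ n) ^ m) *
        qPochInf (q ^ 3 * (q ^ 2) ^ n) (q ^ 2) := by
  have hz : ‖q ^ 3 * (q ^ 2) ^ n‖ < 1 :=
    norm_term_lt (npow hq 3 (by norm_num)) (npow hq 2 two_ne_zero) n
  have h := qbinom (a := q ^ 3) (npow hq 3 (by norm_num)) (npow hq 2 two_ne_zero) hz
  have e1 : q ^ 3 * (q ^ 3 * (q ^ 2) ^ n) = q ^ 6 * (q ^ 2) ^ n := by ring
  rw [e1] at h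
  exact h.symm

lemma qbinom1 (hq : ‖q‖ < 1) (m : ℕ) :
    qPochInf (q ^ 3 * (q ^ 2) ^ m) (q ^ 2) =
      (∑' n : ℕ, cfun q (q ^ 2) n * ((q ^ 2) ^ (m + 1)) ^ n) *
        qPochInf (q ^ 2 * (q ^ 2) ^ m) (q ^ 2) := by
  have hz : ‖(q ^ 2) ^ (m + 1)‖ < 1 := by
    rw [pow_succ']
    exact norm_term_lt (npow hq 2 two_ne_zero) (npow hq 2 two_ne_zero) m
  have := qbinom (a := q) hq (npow hq 2 two_ne_zero) hz
  have e1 : q * (q ^ 2) ^ (m + 1) = q ^ 3 * (q ^ 2) ^ m := by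
    rw [pow_succ']; ring
  have e2 : (q ^ 2) ^ (m + 1) = q ^ 2 * (q ^ 2) ^ m := pow_succ' _ _
  rw [e1] at this
  rw [← this, e2]

lemma hz3 (hq : ‖q‖ < 1) (n : ℕ) : ‖q ^ 3 * (q ^ 2) ^ n‖ < 1 :=
  norm_term_lt (npow hq 3 (by norm_num)) (npow hq 2 two_ne_zero) n

lemma hzm (hq : ‖q‖ < 1) (m : ℕ) : ‖(q ^ 2) ^ (m + 1)‖ < 1 := by
  rw [pow_succ']
  exact norm_term_lt (npow hq 2 two_ne_zero) (npow hq 2 two_ne_zero) m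

lemma alg1 (x u T B A1 A2 P1 P2 : ℂ) (hB : B ≠ 0) (hA1 : A1 ≠ 0) (hP1 : P1 ≠ 0)
    (hP2 : P2 ≠ 0) :
    x * u * (T * B) * (A2 / P2) / (B * (A1 / P1)) = x * A2 / A1 * (P1 / P2 * (u * T)) := by
  field_simp

lemma alg2 (y T A3 A2 P3 P2 : ℂ) (hA2 : A2 ≠ 0) (hP3 : P3 ≠ 0) (hP2 : P2 ≠ 0)
    (hT : T = A3 / P3 / (A2 / P2)) :
    P3 / P2 * y * T = A3 / A2 * y := by
  subst hT
  field_simp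

lemma alg3 (x A2 A5 r s : ℂ) (hA2 : A2 ≠ 0) (hA5 : A5 ≠ 0) (hr : r ≠ 0) (hs : s ≠ 0) :
    x * A2 / (r * s * A5) * (s * A5 / A2 * (1 - (1 - s))⁻¹) = x / (r * s) := by
  have : (1 : ℂ) - (1 - s) = s := by ring
  rw [this]
  field_simp

noncomputable def Gf (q : ℂ) (n m : ℕ) : ℂ :=
  cfun (q ^ 1) (q ^ 2) n * ((q ^ 2) ^ n *
    (cfun (q ^ 3) (q ^ 2) m * (q ^ 3 * (q ^ 2) ^ n) ^ m))

lemma main_sum (hq : ‖q‖ < 1) :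
    (∑' n : ℕ, q ^ (2 * n + 1) * qPochInf (q ^ (2 * n + 6)) (q ^ 2) *
        qPochInf (q ^ (2 * n + 2)) (q ^ 2) /
        (qPochInf (q ^ (2 * n + 3)) (q ^ 2) * qPochInf (q ^ (2 * n + 1)) (q ^ 2))) =
      q / ((1 - q) * (1 - q ^ 3)) := by
  have hp : ‖q ^ 2‖ < 1 := npow hq 2 two_ne_zero
  have epow : ∀ (n k : ℕ), q ^ (2 * n + k) = q ^ k * (q ^ 2) ^ n := by
    intro n k
    rw [← pow_mul, ← pow_add, add_comm]
  -- step 1 : termwise rewrite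
  have hterm : ∀ n : ℕ, q ^ (2 * n + 1) * qPochInf (q ^ (2 * n + 6)) (q ^ 2) *
      qPochInf (q ^ (2 * n + 2)) (q ^ 2) /
      (qPochInf (q ^ (2 * n + 3)) (q ^ 2) * qPochInf (q ^ (2 * n + 1)) (q ^ 2)) =
      (q ^ 1 * qPochInf (q ^ 2) (q ^ 2) / qPochInf (q ^ 1) (q ^ 2)) * ∑' m : ℕ, Gf q n m := by
    intro n
    rw [epow n 1, epow n 6, epow n 2, epow n 3, qbinom3 hq n,
      inf_shift hq 2 two_ne_zero n, inf_shift hq 1 one_ne_zero n]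
    simp only [Gf]
    rw [tsum_mul_left, tsum_mul_left]
    simp only [cfun]
    exact alg1 _ _ _ _ _ _ _ _ (shift_ne_zero hq 3 (by norm_num) n)
      (inf_ne_zero hq 1 one_ne_zero) (qPoch_ne_zero (npow hq 1 one_ne_zero) hp n)
      (qPoch_ne_zero hp hp n)
  rw [tsum_congr hterm, tsum_mul_left]
  -- step 2 : Fubini
  have hG1 : ∀ n, Summable (Gf q n) := by
    intro n
    apply Summable.congr (((summable_cfun (a := q ^ 3) hp (hz3 hq n)).mul_left
      ((q ^ 2) ^ n)).mul_left (cfun (q ^ 1) (q ^ 2) n))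
    intro m
    simp only [Gf]
  have hG2 : ∀ m, Summable (fun n => Gf q n m) := by
    intro m
    apply Summable.congr (((summable_cfun (a := q ^ 1) hp (hzm hq m)).mul_left
      (cfun (q ^ 3) (q ^ 2) m * (q ^ 3) ^ m)))
    intro n
    simp only [Gf]
    ring
  have hGsum : Summable (Function.uncurry (Gf q)) := by
    apply Summable.of_norm_bounded (g := fun nm : ℕ × ℕ =>
      (Cb (q ^ 1) (q ^ 2) * ‖q ^ 2‖ ^ nm.1) * (Cb (q ^ 3) (q ^ 2) * ‖q ^ 3‖ ^ nm.2))
    · exact Summable.mul_of_nonneg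
        ((summable_geometric_of_lt_one (norm_nonneg _) hp).mul_left _)
        ((summable_geometric_of_lt_one (norm_nonneg _) (npow hq 3 (by norm_num))).mul_left _)
        (fun n => mul_nonneg (Cb_nonneg hp) (pow_nonneg (norm_nonneg _) _))
        (fun m => mul_nonneg (Cb_nonneg hp) (pow_nonneg (norm_nonneg _) _))
    · rintro ⟨n, m⟩
      have b1 : ‖cfun (q ^ 1) (q ^ 2) n‖ ≤ Cb (q ^ 1) (q ^ 2) := norm_cfun_le hp n
      have b3 : ‖cfun (q ^ 3) (q ^ 2) m‖ ≤ Cb (q ^ 3) (q ^ 2) := norm_cfun_le hp m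
      have b2 : ‖q ^ 3 * (q ^ 2) ^ n‖ ^ m ≤ ‖q ^ 3‖ ^ m :=
        pow_le_pow_left₀ (norm_nonneg _) (norm_term_le n hp) m
      have hnorm : ‖Function.uncurry (Gf q) (n, m)‖ =
          (‖cfun (q ^ 1) (q ^ 2) n‖ * ‖q ^ 2‖ ^ n) *
            (‖cfun (q ^ 3) (q ^ 2) m‖ * ‖q ^ 3 * (q ^ 2) ^ n‖ ^ m) := by
        simp only [Function.uncurry, Gf, norm_mul, norm_pow]
        ring
      rw [hnorm]
      apply mul_le_mul
      · exact mul_le_mul_of_nonneg_right b1 (pow_nonneg (norm_nonneg _) _)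
      · exact mul_le_mul b3 b2 (pow_nonneg (norm_nonneg _) _) (Cb_nonneg hp)
      · exact mul_nonneg (norm_nonneg _) (pow_nonneg (norm_nonneg _) _)
      · exact mul_nonneg (Cb_nonneg hp) (pow_nonneg (norm_nonneg _) _)
  have hswap : ∑' n : ℕ, ∑' m : ℕ, Gf q n m = ∑' m : ℕ, ∑' n : ℕ, Gf q n m :=
    (Summable.tsum_comm' hGsum hG1 hG2).symm
  rw [hswap]
  -- step 3 : evaluate inner sums
  have hinner : ∀ m : ℕ, (∑' n : ℕ, Gf q n m) =
      (qPochInf (q ^ 3) (q ^ 2) / qPochInf (q ^ 2) (q ^ 2)) * (q ^ 3) ^ m := by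
    intro m
    have e1 : (∑' n : ℕ, Gf q n m) = (cfun (q ^ 3) (q ^ 2) m * (q ^ 3) ^ m) *
        ∑' n : ℕ, cfun (q ^ 1) (q ^ 2) n * ((q ^ 2) ^ (m + 1)) ^ n := by
      rw [← tsum_mul_left]
      apply tsum_congr
      intro n
      simp only [Gf]
      ring
    rw [e1]
    have hB2 := shift_ne_zero hq 2 two_ne_zero m
    have hF : (∑' n : ℕ, cfun q (q ^ 2) n * ((q ^ 2) ^ (m + 1)) ^ n) =
        qPochInf (q ^ 3 * (q ^ 2) ^ m) (q ^ 2) / qPochInf (q ^ 2 * (q ^ 2) ^ m) (q ^ 2) := by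
      rw [eq_div_iff hB2]
      exact (qbinom1 hq m).symm
    have hq1 : (∑' n : ℕ, cfun (q ^ 1) (q ^ 2) n * ((q ^ 2) ^ (m + 1)) ^ n) =
        ∑' n : ℕ, cfun q (q ^ 2) n * ((q ^ 2) ^ (m + 1)) ^ n := by
      rw [pow_one]
    rw [hF, inf_shift hq 3 (by norm_num) m, inf_shift hq 2 two_ne_zero m] at hq1
    simp only [cfun]
    exact alg2 _ _ _ _ _ _ (inf_ne_zero hq 2 two_ne_zero)
      (qPoch_ne_zero (npow hq 3 (by norm_num)) hp m) (qPoch_ne_zero hp hp m) hq1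
  rw [tsum_congr hinner, tsum_mul_left,
    tsum_geometric_of_norm_lt_one (npow hq 3 (by norm_num))]
  -- step 4 : final product simplification
  have hs1 : qPochInf (q ^ 1) (q ^ 2) =
      ((1 - q) * (1 - q ^ 3)) * qPochInf (q ^ 5) (q ^ 2) := by
    have h := qPochInf_split (npow hq 1 one_ne_zero) hp 2
    have e5 : q ^ 1 * (q ^ 2) ^ 2 = q ^ 5 := by ring
    rw [e5] at h
    rw [h]
    congr 1
    rw [qPoch, Finset.prod_range_succ, Finset.prod_range_one]
    ring
  have hs3 : qPochInf (q ^ 3) (q ^ 2) = (1 - q ^ 3) * qPochInf (q ^ 5) (q ^ 2) := by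
    have h := qPochInf_split (npow hq 3 (by norm_num)) hp 1
    have e5 : q ^ 3 * (q ^ 2) ^ 1 = q ^ 5 := by ring
    rw [e5] at h
    rw [h]
    congr 1
    rw [qPoch, Finset.prod_range_one]
    ring
  rw [hs1, hs3]
  have halg := alg3 (q ^ 1) (qPochInf (q ^ 2) (q ^ 2)) (qPochInf (q ^ 5) (q ^ 2))
    (1 - q) (1 - q ^ 3) (inf_ne_zero hq 2 two_ne_zero) (inf_ne_zero hq 5 (by norm_num))
    (one_sub_ne_zero hq) (one_sub_ne_zero (npow hq 3 (by norm_num)))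
  have hss : (1 : ℂ) - (1 - (1 - q ^ 3)) = 1 - q ^ 3 := by ring
  rw [hss] at halg
  rw [halg, pow_one]

lemma part2 (hq : ‖q‖ < 1) :
    q / ((1 - q) * (1 - q ^ 3)) = ∑' n : ℕ, (((n + 2) / 3 : ℕ) : ℂ) * q ^ n := by
  have h1q : (1:ℂ) - q ≠ 0 := one_sub_ne_zero hq
  have h3q : (1:ℂ) - q ^ 3 ≠ 0 := one_sub_ne_zero (npow hq 3 (by norm_num))
  have hfs : Summable (fun n : ℕ => (((n + 2) / 3 : ℕ) : ℂ) * q ^ n) := by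
    apply Summable.of_norm_bounded (g := fun n : ℕ => ((n : ℝ) + 2) * ‖q‖ ^ n)
    · have h1 : Summable (fun n : ℕ => (n : ℝ) * ‖q‖ ^ n) := by
        have := summable_pow_mul_geometric_of_norm_lt_one (R := ℝ) (r := ‖q‖) 1
          (by rwa [Real.norm_eq_abs, _root_.abs_of_nonneg (norm_nonneg q)])
        simpa using this
      have h2 : Summable (fun n : ℕ => (2 : ℝ) * ‖q‖ ^ n) :=
        (summable_geometric_of_lt_one (norm_nonneg q) hq).mul_left _
      exact (h1.add h2).congr fun n => by ring
    · intro n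
      rw [norm_mul, norm_pow, Complex.norm_natCast]
      apply mul_le_mul_of_nonneg_right _ (pow_nonneg (norm_nonneg q) n)
      have : ((n + 2) / 3 : ℕ) ≤ n + 2 := Nat.div_le_self _ _
      calc (((n + 2) / 3 : ℕ) : ℝ) ≤ ((n + 2 : ℕ) : ℝ) := by exact_mod_cast this
      _ = (n : ℝ) + 2 := by push_cast; ring
  have hmul : (∑' n : ℕ, (((n + 2) / 3 : ℕ) : ℂ) * q ^ n) * q ^ 3 =
      ∑' n : ℕ, (((n + 2) / 3 : ℕ) : ℂ) * q ^ (n + 3) := by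
    rw [← tsum_mul_right]
    exact tsum_congr fun n => by ring
  have hsplit : (∑' n : ℕ, (((n + 2) / 3 : ℕ) : ℂ) * q ^ n) =
      (∑ n ∈ Finset.range 3, (((n + 2) / 3 : ℕ) : ℂ) * q ^ n) +
      ∑' n : ℕ, ((((n + 3) + 2) / 3 : ℕ) : ℂ) * q ^ (n + 3) :=
    (Summable.sum_add_tsum_nat_add 3 hfs).symm
  have hhead : (∑ n ∈ Finset.range 3, (((n + 2) / 3 : ℕ) : ℂ) * q ^ n) = q + q ^ 2 := by
    rw [Finset.sum_range_succ, Finset.sum_range_succ, Finset.sum_range_one]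
    norm_num
  have htail : Summable (fun n : ℕ => (((n + 2) / 3 : ℕ) : ℂ) * q ^ (n + 3)) :=
    (hfs.mul_right (q ^ 3)).congr fun n => by ring
  have htail2 : Summable (fun n : ℕ => ((((n + 3) + 2) / 3 : ℕ) : ℂ) * q ^ (n + 3)) :=
    (summable_nat_add_iff (f := fun n : ℕ => (((n + 2) / 3 : ℕ) : ℂ) * q ^ n) 3).2 hfs
  have hdiff : ∀ n : ℕ, ((((n + 3) + 2) / 3 : ℕ) : ℂ) * q ^ (n + 3) -
      (((n + 2) / 3 : ℕ) : ℂ) * q ^ (n + 3) = q ^ (n + 3) := by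
    intro n
    have : ((n + 3) + 2) / 3 = (n + 2) / 3 + 1 := by omega
    rw [this]
    push_cast
    ring
  have key : (∑' n : ℕ, (((n + 2) / 3 : ℕ) : ℂ) * q ^ n) * (1 - q ^ 3) =
      q + q ^ 2 + q ^ 3 * (1 - q)⁻¹ := by
    rw [mul_sub, mul_one, hmul]
    nth_rewrite 1 [hsplit]
    rw [hhead, add_sub_assoc, ← Summable.tsum_sub htail2 htail, tsum_congr hdiff]
    have : (∑' n : ℕ, q ^ (n + 3)) = q ^ 3 * (1 - q)⁻¹ := by
      have := tsum_geometric_of_norm_lt_one hq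
      calc (∑' n : ℕ, q ^ (n + 3)) = ∑' n : ℕ, q ^ 3 * q ^ n := by
            exact tsum_congr fun n => by ring
      _ = q ^ 3 * ∑' n : ℕ, q ^ n := tsum_mul_left
      _ = q ^ 3 * (1 - q)⁻¹ := by rw [this]
    rw [this]
  have hF : (∑' n : ℕ, (((n + 2) / 3 : ℕ) : ℂ) * q ^ n) =
      (q + q ^ 2 + q ^ 3 * (1 - q)⁻¹) / (1 - q ^ 3) := by
    rw [eq_div_iff h3q]
    exact key
  rw [hF]
  field_simp
  ring

end App

end QAux

theorem stmt_13 (q : ℂ) (hq : ‖q‖ < 1) :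
    (∑' n : ℕ, q ^ (2 * n + 1) * qPochInf (q ^ (2 * n + 6)) (q ^ 2) *
        qPochInf (q ^ (2 * n + 2)) (q ^ 2) /
        (qPochInf (q ^ (2 * n + 3)) (q ^ 2) * qPochInf (q ^ (2 * n + 1)) (q ^ 2))) =
      q / ((1 - q) * (1 - q ^ 3)) ∧
    q / ((1 - q) * (1 - q ^ 3)) = ∑' n : ℕ, ((n + 2) / 3 : ℕ) * q ^ n :=
  ⟨QAux.main_sum hq, QAux.part2 hq⟩
end

section
/- For |q|<1, ∑_{n≥0} q^{4n+2} (-q^{2n+6};q^2)_∞ (-q^{2n+2};q^2)_∞ / (q^{2n+1};q^2)_∞^2 = (2q^3(2-q+q^2)/((1+q)(1+q^3)^2)) · (-q^2;q^2)_∞(-q^4;q^2)_∞/(q;q^2)_∞^2 + q^2(1-q)/((1+q)(1+q^3)^2). -/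
open scoped BigOperators

open Filter Topology

lemma aux_one_sub_ne (z : ℂ) (h : ‖z‖ < 1) : 1 - z ≠ 0 := by
  intro hc
  have : z = 1 := by linear_combination -hc
  rw [this] at h; simp at h

lemma aux_summable_log (Q a : ℂ) (hQ : ‖Q‖ < 1) :
    Summable (fun j : ℕ => Complex.log (1 - a * Q ^ j)) := by
  have h0 : Tendsto (fun k : ℕ => ‖a‖ * ‖Q‖ ^ k) atTop (𝓝 (‖a‖ * 0)) :=
    (tendsto_pow_atTop_nhds_zero_of_lt_one (norm_nonneg Q) hQ).const_mul ‖a‖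
  rw [mul_zero] at h0
  obtain ⟨k, hk⟩ := (h0.eventually_le_const (by norm_num : (0:ℝ) < 1/2)).exists
  rw [← summable_nat_add_iff k]
  apply Summable.of_norm_bounded (g := fun j => 3/2 * (‖a‖ * ‖Q‖ ^ k) * ‖Q‖ ^ j)
    ((summable_geometric_of_lt_one (norm_nonneg Q) hQ).mul_left _)
  intro j
  have hQj : ‖Q‖ ^ j ≤ 1 := pow_le_one₀ (norm_nonneg Q) hQ.le
  have hnorm : ‖a * Q ^ (j + k)‖ = (‖a‖ * ‖Q‖ ^ k) * ‖Q‖ ^ j := by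
    rw [norm_mul, norm_pow, pow_add]; ring
  have hsmall : ‖-(a * Q ^ (j + k))‖ ≤ 1/2 := by
    rw [norm_neg, hnorm]
    calc (‖a‖ * ‖Q‖ ^ k) * ‖Q‖ ^ j ≤ (‖a‖ * ‖Q‖ ^ k) * 1 := by
          apply mul_le_mul_of_nonneg_left hQj
          positivity
      _ ≤ 1/2 := by rw [mul_one]; exact hk
  have := Complex.norm_log_one_add_half_le_self hsmall
  rw [norm_neg, hnorm] at this
  calc ‖Complex.log (1 - a * Q ^ (j + k))‖
      = ‖Complex.log (1 + -(a * Q ^ (j + k)))‖ := by rw [sub_eq_add_neg]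
    _ ≤ 3/2 * ((‖a‖ * ‖Q‖ ^ k) * ‖Q‖ ^ j) := this
    _ = 3/2 * (‖a‖ * ‖Q‖ ^ k) * ‖Q‖ ^ j := by ring

lemma aux_exp (Q a : ℂ) (hQ : ‖Q‖ < 1) (ha : ‖a‖ < 1) :
    qPochInf a Q = Complex.exp (∑' j : ℕ, Complex.log (1 - a * Q ^ j)) := by
  have hne : ∀ j : ℕ, 1 - a * Q ^ j ≠ 0 := by
    intro j
    apply aux_one_sub_ne
    calc ‖a * Q ^ j‖ = ‖a‖ * ‖Q‖ ^ j := by rw [norm_mul, norm_pow]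
      _ ≤ ‖a‖ * 1 := mul_le_mul_of_nonneg_left (pow_le_one₀ (norm_nonneg Q) hQ.le) (norm_nonneg a)
      _ < 1 := by rw [mul_one]; exact ha
  have := Complex.cexp_tsum_eq_tprod (f := fun j : ℕ => 1 - a * Q ^ j)
    hne (aux_summable_log Q a hQ)
  exact this.symm

lemma aux_log_shift (Q a : ℂ) (hQ : ‖Q‖ < 1) :
    (∑' j : ℕ, Complex.log (1 - a * Q ^ j)) =
      Complex.log (1 - a) + ∑' j : ℕ, Complex.log (1 - (a * Q) * Q ^ j) := by
  rw [Summable.tsum_eq_zero_add (aux_summable_log Q a hQ)]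
  congr 1
  · rw [pow_zero, mul_one]
  · apply tsum_congr
    intro j
    congr 2
    ring

lemma aux_bound (Q a : ℂ) (hQ : ‖Q‖ < 1) (ha : ‖a‖ ≤ 1/2) :
    ‖∑' j : ℕ, Complex.log (1 - a * Q ^ j)‖ ≤ 3/2 * (1 - ‖Q‖)⁻¹ * ‖a‖ := by
  have hb : ∀ j : ℕ, ‖Complex.log (1 - a * Q ^ j)‖ ≤ 3/2 * ‖a‖ * ‖Q‖ ^ j := by
    intro j
    have hQj : ‖Q‖ ^ j ≤ 1 := pow_le_one₀ (norm_nonneg Q) hQ.le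
    have hnorm : ‖-(a * Q ^ j)‖ = ‖a‖ * ‖Q‖ ^ j := by rw [norm_neg, norm_mul, norm_pow]
    have hsmall : ‖-(a * Q ^ j)‖ ≤ 1/2 := by
      rw [hnorm]
      calc ‖a‖ * ‖Q‖ ^ j ≤ ‖a‖ * 1 := mul_le_mul_of_nonneg_left hQj (norm_nonneg a)
        _ ≤ 1/2 := by rw [mul_one]; exact ha
    have := Complex.norm_log_one_add_half_le_self hsmall
    rw [hnorm] at this
    calc ‖Complex.log (1 - a * Q ^ j)‖ = ‖Complex.log (1 + -(a * Q ^ j))‖ := by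
          rw [sub_eq_add_neg]
      _ ≤ 3/2 * (‖a‖ * ‖Q‖ ^ j) := this
      _ = 3/2 * ‖a‖ * ‖Q‖ ^ j := by ring
  have hgs : Summable (fun j : ℕ => 3/2 * ‖a‖ * ‖Q‖ ^ j) :=
    (summable_geometric_of_lt_one (norm_nonneg Q) hQ).mul_left _
  have hsn : Summable (fun j : ℕ => ‖Complex.log (1 - a * Q ^ j)‖) :=
    Summable.of_nonneg_of_le (fun j => norm_nonneg _) hb hgs
  calc ‖∑' j : ℕ, Complex.log (1 - a * Q ^ j)‖ ≤ ∑' j : ℕ, ‖Complex.log (1 - a * Q ^ j)‖ :=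
        norm_tsum_le_tsum_norm hsn
    _ ≤ ∑' j : ℕ, 3/2 * ‖a‖ * ‖Q‖ ^ j := Summable.tsum_le_tsum hb hsn hgs
    _ = 3/2 * ‖a‖ * (1 - ‖Q‖)⁻¹ := by
        rw [tsum_mul_left, tsum_geometric_of_lt_one (norm_nonneg Q) hQ]
    _ = 3/2 * (1 - ‖Q‖)⁻¹ * ‖a‖ := by ring

theorem stmt_14 (q : ℂ) (hq : ‖q‖ < 1) :
    (∑' n : ℕ, q ^ (4 * n + 2) * qPochInf (-q ^ (2 * n + 6)) (q ^ 2) *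
        qPochInf (-q ^ (2 * n + 2)) (q ^ 2) / (qPochInf (q ^ (2 * n + 1)) (q ^ 2)) ^ 2) =
      2 * q ^ 3 * (2 - q + q ^ 2) / ((1 + q) * (1 + q ^ 3) ^ 2) *
        (qPochInf (-q ^ 2) (q ^ 2) * qPochInf (-q ^ 4) (q ^ 2) / (qPochInf q (q ^ 2)) ^ 2) +
        q ^ 2 * (1 - q) / ((1 + q) * (1 + q ^ 3) ^ 2) := by
  have hQ : ‖q ^ 2‖ < 1 := by
    rw [norm_pow]
    exact pow_lt_one₀ (norm_nonneg q) hq two_ne_zero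
  have hqk : ∀ k : ℕ, 1 ≤ k → ‖q ^ k‖ < 1 := by
    intro k hk
    rw [norm_pow]
    exact pow_lt_one₀ (norm_nonneg q) hq (by omega)
  set L : ℂ → ℂ := fun a => ∑' j : ℕ, Complex.log (1 - a * (q ^ 2) ^ j) with hL
  set F : ℕ → ℂ :=
    fun n => Complex.exp (L (-q ^ (2 * n + 6)) + L (-q ^ (2 * n + 2)) - 2 * L (q ^ (2 * n + 1)))
    with hF
  set D : ℂ := (1 + q) * (1 + q ^ 3) ^ 2 with hDdef
  have hD : D ≠ 0 := by
    apply mul_ne_zero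
    · have := aux_one_sub_ne (-q) (by rwa [norm_neg])
      simpa [sub_neg_eq_add] using this
    · apply pow_ne_zero
      have := aux_one_sub_ne (-q ^ 3) (by rw [norm_neg]; exact hqk 3 (by norm_num))
      simpa [sub_neg_eq_add] using this
  have hpoch : ∀ a : ℂ, ‖a‖ < 1 → qPochInf a (q ^ 2) = Complex.exp (L a) := by
    intro a ha
    rw [hL]
    exact aux_exp (q ^ 2) a hQ ha
  have hshift : ∀ a : ℂ, L a = Complex.log (1 - a) + L (a * q ^ 2) := by
    intro a
    rw [hL]
    exact aux_log_shift (q ^ 2) a hQ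
  set A : ℕ → ℂ := fun n =>
    ((-q^2 + q^3) + (2*q^3 - q^4 + q^5 - q^6 + q^7) * q^(2*n)
      + (q^2 + q^3 - q^4 + q^5 + 2*q^7 - q^8 + q^9) * q^(4*n)
      + (q^6 + q^7 - q^8 + q^9) * q^(6*n)) / D with hA
  -- summand = q^(4n+2) * F n
  have hsummand : ∀ n : ℕ,
      q ^ (4 * n + 2) * qPochInf (-q ^ (2 * n + 6)) (q ^ 2) *
        qPochInf (-q ^ (2 * n + 2)) (q ^ 2) / (qPochInf (q ^ (2 * n + 1)) (q ^ 2)) ^ 2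
      = q ^ (4 * n + 2) * F n := by
    intro n
    have h1 : ‖-q ^ (2 * n + 6)‖ < 1 := by rw [norm_neg]; exact hqk _ (by omega)
    have h2 : ‖-q ^ (2 * n + 2)‖ < 1 := by rw [norm_neg]; exact hqk _ (by omega)
    have h3 : ‖q ^ (2 * n + 1)‖ < 1 := hqk _ (by omega)
    rw [hpoch _ h1, hpoch _ h2, hpoch _ h3, hF]
    beta_reduce
    rw [show L (-q ^ (2 * n + 6)) + L (-q ^ (2 * n + 2)) - 2 * L (q ^ (2 * n + 1))
        = L (-q ^ (2 * n + 6)) + L (-q ^ (2 * n + 2)) - (L (q ^ (2 * n + 1)) + L (q ^ (2 * n + 1)))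
        from by ring]
    rw [Complex.exp_sub, Complex.exp_add, Complex.exp_add, ← sq]
    ring
  -- telescoping key
  have hFrec : ∀ n : ℕ, F n = (1 + q ^ (2 * n + 6)) * (1 + q ^ (2 * n + 2)) /
      (1 - q ^ (2 * n + 1)) ^ 2 * F (n + 1) := by
    intro n
    have hu : (1 + q ^ (2 * n + 6)) ≠ 0 := by
      have := aux_one_sub_ne (-q ^ (2 * n + 6)) (by rw [norm_neg]; exact hqk _ (by omega))
      rwa [sub_neg_eq_add] at this
    have hv : (1 + q ^ (2 * n + 2)) ≠ 0 := by
      have := aux_one_sub_ne (-q ^ (2 * n + 2)) (by rw [norm_neg]; exact hqk _ (by omega))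
      rwa [sub_neg_eq_add] at this
    have hw : (1 - q ^ (2 * n + 1)) ≠ 0 := aux_one_sub_ne _ (hqk _ (by omega))
    have e1 : L (-q ^ (2 * n + 6)) =
        Complex.log (1 + q ^ (2 * n + 6)) + L (-q ^ (2 * (n + 1) + 6)) := by
      have := hshift (-q ^ (2 * n + 6))
      rwa [show (-q ^ (2 * n + 6) : ℂ) * q ^ 2 = -q ^ (2 * (n + 1) + 6) from by ring,
        sub_neg_eq_add] at this
    have e2 : L (-q ^ (2 * n + 2)) =
        Complex.log (1 + q ^ (2 * n + 2)) + L (-q ^ (2 * (n + 1) + 2)) := by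
      have := hshift (-q ^ (2 * n + 2))
      rwa [show (-q ^ (2 * n + 2) : ℂ) * q ^ 2 = -q ^ (2 * (n + 1) + 2) from by ring,
        sub_neg_eq_add] at this
    have e3 : L (q ^ (2 * n + 1)) =
        Complex.log (1 - q ^ (2 * n + 1)) + L (q ^ (2 * (n + 1) + 1)) := by
      have := hshift (q ^ (2 * n + 1))
      rwa [show (q ^ (2 * n + 1) : ℂ) * q ^ 2 = q ^ (2 * (n + 1) + 1) from by ring] at this
    rw [hF]
    beta_reduce
    rw [e1, e2, e3]
    rw [show Complex.log (1 + q ^ (2 * n + 6)) + L (-q ^ (2 * (n + 1) + 6)) +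
        (Complex.log (1 + q ^ (2 * n + 2)) + L (-q ^ (2 * (n + 1) + 2))) -
        2 * (Complex.log (1 - q ^ (2 * n + 1)) + L (q ^ (2 * (n + 1) + 1)))
        = (Complex.log (1 + q ^ (2 * n + 6)) + Complex.log (1 + q ^ (2 * n + 2)) -
            (Complex.log (1 - q ^ (2 * n + 1)) + Complex.log (1 - q ^ (2 * n + 1)))) +
          (L (-q ^ (2 * (n + 1) + 6)) + L (-q ^ (2 * (n + 1) + 2)) -
            2 * L (q ^ (2 * (n + 1) + 1))) from by ring]
    rw [Complex.exp_add, Complex.exp_sub, Complex.exp_add, Complex.exp_add, ← sq,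
      Complex.exp_log hu, Complex.exp_log hv, Complex.exp_log hw]
  have hkey : ∀ n : ℕ, (A n - q ^ (4 * n + 2)) * ((1 + q ^ (2 * n + 6)) * (1 + q ^ (2 * n + 2)))
      = A (n + 1) * (1 - q ^ (2 * n + 1)) ^ 2 := by
    intro n
    rw [hA]
    beta_reduce
    rw [hDdef]
    have h1q : (1 + q) ≠ 0 := fun h => hD (by rw [hDdef, h, zero_mul])
    have h3q : (1 + q ^ 3) ≠ 0 := fun h => hD (by rw [hDdef, h]; ring)
    field_simp
    ring
  have htel : ∀ n : ℕ, q ^ (4 * n + 2) * F n = A n * F n - A (n + 1) * F (n + 1) := by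
    intro n
    have hw : (1 - q ^ (2 * n + 1)) ≠ 0 := aux_one_sub_ne _ (hqk _ (by omega))
    have hAsucc : A (n + 1) = (A n - q ^ (4 * n + 2)) *
        ((1 + q ^ (2 * n + 6)) * (1 + q ^ (2 * n + 2))) / (1 - q ^ (2 * n + 1)) ^ 2 := by
      rw [eq_div_iff (pow_ne_zero 2 hw)]
      exact (hkey n).symm
    rw [hFrec n, hAsucc]
    field_simp
    ring
  -- limits
  have hLtend : ∀ c : ℂ, Tendsto (fun n : ℕ => L (c * (q ^ 2) ^ n)) atTop (𝓝 0) := by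
    intro c
    apply squeeze_zero_norm' (a := fun n : ℕ => 3/2 * (1 - ‖q ^ 2‖)⁻¹ * (‖c‖ * ‖q ^ 2‖ ^ n))
    · have h0 : Tendsto (fun n : ℕ => ‖c‖ * ‖q ^ 2‖ ^ n) atTop (𝓝 (‖c‖ * 0)) :=
        (tendsto_pow_atTop_nhds_zero_of_lt_one (norm_nonneg _) hQ).const_mul ‖c‖
      rw [mul_zero] at h0
      filter_upwards [h0.eventually_le_const (by norm_num : (0:ℝ) < 1/2)] with n hn
      have hn' : ‖c * (q ^ 2) ^ n‖ ≤ 1/2 := by rw [norm_mul, norm_pow]; exact hn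
      have hb := aux_bound (q ^ 2) (c * (q ^ 2) ^ n) hQ hn'
      rw [hL]
      refine hb.trans (le_of_eq ?_)
      simp [norm_mul, norm_pow]
    · have h0 : Tendsto (fun n : ℕ => ‖c‖ * ‖q ^ 2‖ ^ n) atTop (𝓝 (‖c‖ * 0)) :=
        (tendsto_pow_atTop_nhds_zero_of_lt_one (norm_nonneg _) hQ).const_mul ‖c‖
      rw [mul_zero] at h0
      have := h0.const_mul (3/2 * (1 - ‖q ^ 2‖)⁻¹)
      rwa [mul_zero] at this
  have hLt : ∀ (s : ℂ) (m : ℕ), Tendsto (fun n : ℕ => L (s * q ^ (2 * n + m))) atTop (𝓝 0) := by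
    intro s m
    have : (fun n : ℕ => L (s * q ^ (2 * n + m))) = fun n : ℕ => L ((s * q ^ m) * (q ^ 2) ^ n) := by
      funext n
      congr 1
      ring
    rw [this]
    exact hLtend _
  have hFtend : Tendsto F atTop (𝓝 1) := by
    have h1 : Tendsto (fun n : ℕ => L (-q ^ (2 * n + 6))) atTop (𝓝 0) := by
      have := hLt (-1) 6
      simpa using this
    have h2 : Tendsto (fun n : ℕ => L (-q ^ (2 * n + 2))) atTop (𝓝 0) := by
      have := hLt (-1) 2
      simpa using this
    have h3 : Tendsto (fun n : ℕ => L (q ^ (2 * n + 1))) atTop (𝓝 0) := by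
      have := hLt 1 1
      simpa using this
    have hsum0 : Tendsto (fun n : ℕ => L (-q ^ (2 * n + 6)) + L (-q ^ (2 * n + 2)) -
        2 * L (q ^ (2 * n + 1))) atTop (𝓝 0) := by
      have := (h1.add h2).sub (h3.const_mul 2)
      simpa using this
    rw [hF]
    have := (Complex.continuous_exp.tendsto 0).comp hsum0
    simpa [Function.comp_def] using this
  have ht2 : Tendsto (fun n : ℕ => (q ^ (2 * n) : ℂ)) atTop (𝓝 0) := by
    simpa [pow_mul] using tendsto_pow_atTop_nhds_zero_of_norm_lt_one hQ
  have ht4 : Tendsto (fun n : ℕ => (q ^ (4 * n) : ℂ)) atTop (𝓝 0) := by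
    simpa [pow_mul] using tendsto_pow_atTop_nhds_zero_of_norm_lt_one (hqk 4 (by norm_num))
  have ht6 : Tendsto (fun n : ℕ => (q ^ (6 * n) : ℂ)) atTop (𝓝 0) := by
    simpa [pow_mul] using tendsto_pow_atTop_nhds_zero_of_norm_lt_one (hqk 6 (by norm_num))
  have hAtend : Tendsto A atTop (𝓝 ((-q^2 + q^3) / D)) := by
    rw [hA]
    have := ((((tendsto_const_nhds (x := (-q^2 + q^3 : ℂ)) (f := atTop (α := ℕ))).add
      (ht2.const_mul (2*q^3 - q^4 + q^5 - q^6 + q^7))).add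
      (ht4.const_mul (q^2 + q^3 - q^4 + q^5 + 2*q^7 - q^8 + q^9))).add
      (ht6.const_mul (q^6 + q^7 - q^8 + q^9))).div_const D
    simpa using this
  have hsum : Summable (fun n : ℕ => ‖q ^ (4 * n + 2) * F n‖) := by
    have h4 : ‖q‖ ^ 4 < 1 := pow_lt_one₀ (norm_nonneg q) hq (by norm_num)
    apply Summable.of_norm_bounded_eventually_nat (g := fun n => (2 * ‖q‖ ^ 2) * (‖q‖ ^ 4) ^ n)
      (((summable_geometric_of_lt_one (by positivity) h4)).mul_left _)
    have hFn : Tendsto (fun n => ‖F n‖) atTop (𝓝 1) := by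
      have := hFtend.norm
      simpa using this
    filter_upwards [hFn.eventually_le_const (by norm_num : (1:ℝ) < 2)] with n hn
    rw [norm_norm, norm_mul, norm_pow]
    calc ‖q‖ ^ (4 * n + 2) * ‖F n‖ ≤ ‖q‖ ^ (4 * n + 2) * 2 := by
          apply mul_le_mul_of_nonneg_left hn
          positivity
      _ = 2 * ‖q‖ ^ 2 * (‖q‖ ^ 4) ^ n := by rw [pow_add, ← pow_mul]; ring
  have hhas : HasSum (fun n : ℕ => q ^ (4 * n + 2) * F n) (A 0 * F 0 - (-q^2 + q^3) / D) := by
    rw [hasSum_iff_tendsto_nat_of_summable_norm hsum]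
    have hps : ∀ n : ℕ, ∑ i ∈ Finset.range n, q ^ (4 * i + 2) * F i = A 0 * F 0 - A n * F n := by
      intro n
      rw [Finset.sum_congr rfl (fun i _ => htel i)]
      exact Finset.sum_range_sub' (fun i => A i * F i) n
    simp only [hps]
    have := (hAtend.mul hFtend).const_sub (A 0 * F 0)
    simpa using this
  rw [tsum_congr hsummand, hhas.tsum_eq]
  -- final algebra
  have h4 : (1 + q ^ 4 : ℂ) ≠ 0 := by
    have := aux_one_sub_ne (-q ^ 4) (by rw [norm_neg]; exact hqk 4 (by norm_num))
    rwa [sub_neg_eq_add] at this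
  have e4 : L (-q ^ 4) = Complex.log (1 + q ^ 4) + L (-q ^ 6) := by
    have := hshift (-q ^ 4)
    rwa [show (-q ^ 4 : ℂ) * q ^ 2 = -q ^ 6 from by ring, sub_neg_eq_add] at this
  have hG : qPochInf (-q ^ 2) (q ^ 2) * qPochInf (-q ^ 4) (q ^ 2) / qPochInf q (q ^ 2) ^ 2
      = (1 + q ^ 4) * F 0 := by
    rw [hpoch (-q ^ 2) (by rw [norm_neg]; exact hqk 2 (by norm_num)),
      hpoch (-q ^ 4) (by rw [norm_neg]; exact hqk 4 (by norm_num)),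
      hpoch q hq, e4, hF]
    beta_reduce
    rw [show 2 * 0 + 6 = 6 from rfl, show 2 * 0 + 2 = 2 from rfl, show 2 * 0 + 1 = 1 from rfl,
      pow_one]
    rw [show L (-q ^ 6) + L (-q ^ 2) - 2 * L q = L (-q ^ 6) + L (-q ^ 2) - (L q + L q) from by
      ring]
    rw [Complex.exp_sub, Complex.exp_add, Complex.exp_add, Complex.exp_add,
      Complex.exp_log h4, ← sq]
    ring
  rw [hG, hA]
  beta_reduce
  rw [show (2 : ℕ) * 0 = 0 from rfl, pow_zero]
  rw [hDdef]
  field_simp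
  ring
end

section
/- For |q|<1, ∑_{n≥0} q^{4n+2} (q^{2n+6};q^2)_∞ (q^{2n+2};q^2)_∞ / (q^{2n+1};q^2)_∞^2 = q^2(1+q)/((1-q)(1-q^3)^2). -/
open scoped BigOperators

namespace Stmt15
open Complex Filter Finset

noncomputable def Lam (q : ℂ) : ℝ :=
  (‖q‖ * (1 - ‖q‖)⁻¹ / 2 + 1) * (‖q‖ * (1 - ‖q‖ ^ 2)⁻¹)

lemma one_sub_ne {z : ℂ} (hz : ‖z‖ < 1) : (1 : ℂ) - z ≠ 0 := by
  intro h
  rw [sub_eq_zero] at h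
  rw [← h] at hz
  simp at hz

lemma exp_rep {q : ℂ} (hq : ‖q‖ < 1) {a : ℂ} (ha : ‖a‖ ≤ ‖q‖) :
    Multipliable (fun j : ℕ => 1 - a * (q ^ 2) ^ j) ∧
    ∃ L : ℂ, ‖L‖ ≤ Lam q ∧ qPochInf a (q ^ 2) = Complex.exp L := by
  have hq0 : (0:ℝ) ≤ ‖q‖ := norm_nonneg q
  have hx2 : ‖q‖ ^ 2 < 1 := by nlinarith
  have hx2' : (0:ℝ) ≤ ‖q‖ ^ 2 := by positivity
  set K : ℝ := ‖q‖ * (1 - ‖q‖)⁻¹ / 2 + 1 with hK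
  have hq1 : (0:ℝ) < 1 - ‖q‖ := by linarith
  have hKpos : 0 < K := by
    have h2 : (0:ℝ) ≤ (1 - ‖q‖)⁻¹ := by positivity
    have h3 : (0:ℝ) ≤ ‖q‖ * (1 - ‖q‖)⁻¹ / 2 := by positivity
    rw [hK]; linarith [h3]
  -- termwise norm bounds
  have hterm : ∀ j : ℕ, ‖a * (q ^ 2) ^ j‖ ≤ ‖q‖ * (‖q‖ ^ 2) ^ j := by
    intro j
    rw [norm_mul, norm_pow, norm_pow]
    gcongr
  have htlt : ∀ j : ℕ, ‖a * (q ^ 2) ^ j‖ < 1 := by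
    intro j
    refine lt_of_le_of_lt (hterm j) ?_
    calc ‖q‖ * (‖q‖ ^ 2) ^ j ≤ ‖q‖ * 1 := by
          gcongr
          exact pow_le_one₀ hx2' hx2.le
      _ < 1 := by simpa using hq
  have hne : ∀ j : ℕ, (1 : ℂ) - a * (q ^ 2) ^ j ≠ 0 := fun j => one_sub_ne (htlt j)
  -- log bound
  have hlog : ∀ j : ℕ, ‖Complex.log (1 - a * (q ^ 2) ^ j)‖ ≤ K * ‖q‖ * (‖q‖ ^ 2) ^ j := by
    intro j
    set z : ℂ := -(a * (q ^ 2) ^ j) with hz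
    have hzn : ‖z‖ = ‖a * (q ^ 2) ^ j‖ := norm_neg _
    have hz1 : ‖z‖ < 1 := by rw [hzn]; exact htlt j
    have h1 : (1 : ℂ) - a * (q ^ 2) ^ j = 1 + z := by rw [hz]; ring
    rw [h1]
    refine le_trans (Complex.norm_log_one_add_le hz1) ?_
    have hzq : ‖z‖ ≤ ‖q‖ := by
      rw [hzn]
      refine le_trans (hterm j) ?_
      calc ‖q‖ * (‖q‖ ^ 2) ^ j ≤ ‖q‖ * 1 := by
            gcongr
            exact pow_le_one₀ hx2' hx2.le
        _ = ‖q‖ := mul_one _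
    have hinv : (1 - ‖z‖)⁻¹ ≤ (1 - ‖q‖)⁻¹ := by
      have hz0 : (0:ℝ) < 1 - ‖q‖ := by linarith
      have hz2 : 1 - ‖q‖ ≤ 1 - ‖z‖ := by linarith
      exact inv_anti₀ hz0 hz2
    have h2 : ‖z‖ ^ 2 * (1 - ‖z‖)⁻¹ / 2 + ‖z‖ ≤ K * ‖z‖ := by
      rw [hK]
      have hzn0 : (0:ℝ) ≤ ‖z‖ := norm_nonneg z
      have hinv0 : (0:ℝ) ≤ (1 - ‖z‖)⁻¹ := by
        have : (0:ℝ) < 1 - ‖z‖ := by linarith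
        positivity
      have : ‖z‖ ^ 2 * (1 - ‖z‖)⁻¹ / 2 ≤ ‖q‖ * (1 - ‖q‖)⁻¹ / 2 * ‖z‖ := by
        have : ‖z‖ ^ 2 * (1 - ‖z‖)⁻¹ ≤ ‖q‖ * (1 - ‖q‖)⁻¹ * ‖z‖ := by
          calc ‖z‖ ^ 2 * (1 - ‖z‖)⁻¹ = ‖z‖ * ‖z‖ * (1 - ‖z‖)⁻¹ := by ring
            _ ≤ ‖q‖ * ‖z‖ * (1 - ‖q‖)⁻¹ := by gcongr
            _ = ‖q‖ * (1 - ‖q‖)⁻¹ * ‖z‖ := by ring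
        linarith
      nlinarith
    refine le_trans h2 ?_
    have : K * ‖z‖ ≤ K * (‖q‖ * (‖q‖ ^ 2) ^ j) := by
      gcongr
      rw [hzn]; exact hterm j
    linarith [this]
  -- summability of logs
  have hgeo : Summable (fun j : ℕ => K * ‖q‖ * (‖q‖ ^ 2) ^ j) :=
    (summable_geometric_of_lt_one hx2' hx2).mul_left _
  have hsum : Summable (fun j : ℕ => Complex.log (1 - a * (q ^ 2) ^ j)) :=
    Summable.of_norm_bounded hgeo hlog
  set L : ℂ := ∑' j : ℕ, Complex.log (1 - a * (q ^ 2) ^ j) with hL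
  have hProd : HasProd (fun j : ℕ => 1 - a * (q ^ 2) ^ j) (Complex.exp L) := by
    have h := hsum.hasSum.cexp
    refine h.congr_fun (fun j => ?_)
    exact (Complex.exp_log (hne j)).symm
  refine ⟨hProd.multipliable, L, ?_, hProd.tprod_eq⟩
  -- norm bound on L
  have hsn : Summable (fun j : ℕ => ‖Complex.log (1 - a * (q ^ 2) ^ j)‖) :=
    Summable.of_nonneg_of_le (fun j => norm_nonneg _) hlog hgeo
  have h1 : ‖L‖ ≤ ∑' j : ℕ, K * ‖q‖ * (‖q‖ ^ 2) ^ j :=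
    le_trans (norm_tsum_le_tsum_norm hsn) (Summable.tsum_le_tsum hlog hsn hgeo)
  refine le_trans h1 ?_
  rw [tsum_mul_left, tsum_geometric_of_lt_one hx2' hx2]
  rw [Lam, hK]
  ring_nf
  exact le_refl _

lemma mult {q : ℂ} (hq : ‖q‖ < 1) {a : ℂ} (ha : ‖a‖ ≤ ‖q‖) :
    Multipliable (fun j : ℕ => 1 - a * (q ^ 2) ^ j) :=
  (exp_rep hq ha).1

lemma poch_ne_zero {q : ℂ} (hq : ‖q‖ < 1) {a : ℂ} (ha : ‖a‖ ≤ ‖q‖) :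
    qPochInf a (q ^ 2) ≠ 0 := by
  obtain ⟨L, _, hL⟩ := (exp_rep hq ha).2
  rw [hL]
  exact Complex.exp_ne_zero L

lemma poch_norm_le {q : ℂ} (hq : ‖q‖ < 1) {a : ℂ} (ha : ‖a‖ ≤ ‖q‖) :
    ‖qPochInf a (q ^ 2)‖ ≤ Real.exp (Lam q) := by
  obtain ⟨L, hLb, hL⟩ := (exp_rep hq ha).2
  rw [hL, Complex.norm_exp]
  refine Real.exp_le_exp.2 (le_trans ?_ hLb)
  exact le_trans (le_abs_self L.re) (Complex.abs_re_le_norm L)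

lemma poch_norm_ge {q : ℂ} (hq : ‖q‖ < 1) {a : ℂ} (ha : ‖a‖ ≤ ‖q‖) :
    Real.exp (-(Lam q)) ≤ ‖qPochInf a (q ^ 2)‖ := by
  obtain ⟨L, hLb, hL⟩ := (exp_rep hq ha).2
  rw [hL, Complex.norm_exp]
  refine Real.exp_le_exp.2 ?_
  have h4 : |L.re| ≤ ‖L‖ := Complex.abs_re_le_norm L
  have h5 := neg_abs_le L.re
  have h6 := abs_le.1 h4
  linarith [h6.1]

lemma poch_split {q : ℂ} (hq : ‖q‖ < 1) {a : ℂ} (ha : ‖a‖ ≤ ‖q‖) :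
    qPochInf a (q ^ 2) = (1 - a) * qPochInf (a * q ^ 2) (q ^ 2) := by
  have ha2 : ‖a * q ^ 2‖ ≤ ‖q‖ := by
    rw [norm_mul, norm_pow]
    calc ‖a‖ * ‖q‖ ^ 2 ≤ ‖q‖ * 1 := by
          nlinarith [norm_nonneg a, norm_nonneg q]
      _ = ‖q‖ := mul_one _
  have hm1 : Multipliable (fun n : ℕ => 1 - a * (q ^ 2) ^ (n + 1)) := by
    refine (mult hq ha2).congr (fun n => ?_)
    rw [pow_succ]
    ring
  have h := tprod_eq_zero_mul' (f := fun j : ℕ => 1 - a * (q ^ 2) ^ j) hm1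
  rw [qPochInf, h]
  congr 1
  · simp
  · rw [qPochInf]
    refine tprod_congr (fun n => ?_)
    rw [pow_succ]
    ring

lemma norm_le_one {q : ℂ} (hq : ‖q‖ < 1) {k : ℕ} (hk : 1 ≤ k) : ‖q‖ ^ k ≤ ‖q‖ := by
  calc ‖q‖ ^ k ≤ ‖q‖ ^ 1 := pow_le_pow_of_le_one (norm_nonneg q) hq.le hk
    _ = ‖q‖ := pow_one _

noncomputable def phi (q c : ℂ) (n : ℕ) : ℂ :=
  (c / q ^ 2) ^ n * qPochInf (c * (q ^ 2) ^ n) (q ^ 2) * qPochInf ((q ^ 2) ^ (n + 1)) (q ^ 2) /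
    (qPochInf (q * (q ^ 2) ^ n) (q ^ 2)) ^ 2

lemma arg1_le {q : ℂ} (hq : ‖q‖ < 1) {c : ℂ} (hc : ‖c‖ ≤ ‖q‖ ^ 6) (n : ℕ) :
    ‖c * (q ^ 2) ^ n‖ ≤ ‖q‖ := by
  rw [norm_mul, norm_pow, norm_pow]
  have h1 : (‖q‖ ^ 2) ^ n ≤ 1 := pow_le_one₀ (by positivity) (by nlinarith [norm_nonneg q])
  calc ‖c‖ * (‖q‖ ^ 2) ^ n ≤ ‖q‖ ^ 6 * 1 := by
        refine mul_le_mul hc h1 (by positivity) (by positivity)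
    _ = ‖q‖ ^ 6 := mul_one _
    _ ≤ ‖q‖ := norm_le_one hq (by norm_num)

lemma arg2_le {q : ℂ} (hq : ‖q‖ < 1) (n : ℕ) : ‖(q ^ 2 : ℂ) ^ (n + 1)‖ ≤ ‖q‖ := by
  rw [norm_pow, norm_pow, ← pow_mul]
  exact norm_le_one hq (by omega)

lemma arg3_le {q : ℂ} (hq : ‖q‖ < 1) (n : ℕ) : ‖q * (q ^ 2) ^ n‖ ≤ ‖q‖ := by
  rw [norm_mul, norm_pow, norm_pow, ← pow_mul]
  have h1 : (‖q‖ ^ (2 * n)) ≤ 1 := pow_le_one₀ (norm_nonneg q) hq.le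
  calc ‖q‖ * ‖q‖ ^ (2 * n) ≤ ‖q‖ * 1 := by
        refine mul_le_mul_of_nonneg_left h1 (norm_nonneg q)
    _ = ‖q‖ := mul_one _

lemma phi_norm_le {q : ℂ} (hq : ‖q‖ < 1) {c : ℂ} (hc : ‖c‖ ≤ ‖q‖ ^ 6) (n : ℕ) :
    ‖phi q c n‖ ≤ Real.exp (4 * Lam q) * (‖c‖ / ‖q‖ ^ 2) ^ n := by
  have hB := poch_norm_le hq (arg1_le hq hc n)
  have hB2 := poch_norm_le hq (arg2_le hq n)
  have hm := poch_norm_ge hq (arg3_le hq n)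
  have hmpos : (0:ℝ) < Real.exp (-(Lam q)) := Real.exp_pos _
  have hden : (0:ℝ) < Real.exp (-(Lam q)) ^ 2 := by positivity
  have hq2 : (0:ℝ) ≤ ‖c‖ / ‖q‖ ^ 2 := by positivity
  rw [phi]
  simp only [norm_div, norm_mul, norm_pow]
  have step1 : (‖c‖ / ‖q‖ ^ 2) ^ n * ‖qPochInf (c * (q ^ 2) ^ n) (q ^ 2)‖ *
      ‖qPochInf ((q ^ 2) ^ (n + 1)) (q ^ 2)‖ ≤
      (‖c‖ / ‖q‖ ^ 2) ^ n * (Real.exp (Lam q) * Real.exp (Lam q)) := by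
    have h1 : (‖c‖ / ‖q‖ ^ 2) ^ n * ‖qPochInf (c * (q ^ 2) ^ n) (q ^ 2)‖ ≤
        (‖c‖ / ‖q‖ ^ 2) ^ n * Real.exp (Lam q) :=
      mul_le_mul_of_nonneg_left hB (by positivity)
    calc (‖c‖ / ‖q‖ ^ 2) ^ n * ‖qPochInf (c * (q ^ 2) ^ n) (q ^ 2)‖ *
        ‖qPochInf ((q ^ 2) ^ (n + 1)) (q ^ 2)‖ ≤
        ((‖c‖ / ‖q‖ ^ 2) ^ n * Real.exp (Lam q)) * Real.exp (Lam q) := by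
          refine mul_le_mul h1 hB2 (norm_nonneg _) (by positivity)
      _ = (‖c‖ / ‖q‖ ^ 2) ^ n * (Real.exp (Lam q) * Real.exp (Lam q)) := by ring
  have step2 : Real.exp (-(Lam q)) ^ 2 ≤ ‖qPochInf (q * (q ^ 2) ^ n) (q ^ 2)‖ ^ 2 :=
    pow_le_pow_left₀ hmpos.le hm 2
  calc (‖c‖ / ‖q‖ ^ 2) ^ n * ‖qPochInf (c * (q ^ 2) ^ n) (q ^ 2)‖ *
      ‖qPochInf ((q ^ 2) ^ (n + 1)) (q ^ 2)‖ / ‖qPochInf (q * (q ^ 2) ^ n) (q ^ 2)‖ ^ 2 ≤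
      ((‖c‖ / ‖q‖ ^ 2) ^ n * (Real.exp (Lam q) * Real.exp (Lam q))) /
        Real.exp (-(Lam q)) ^ 2 :=
      div_le_div₀ (by positivity) step1 hden step2
    _ = Real.exp (4 * Lam q) * (‖c‖ / ‖q‖ ^ 2) ^ n := by
      rw [← Real.exp_add]
      have h2 : Real.exp (-(Lam q)) ^ 2 = Real.exp (-(Lam q) * 2) := by
        rw [Real.exp_mul, Real.rpow_two]
      rw [h2, mul_div_assoc, ← Real.exp_sub]
      ring_nf
  
lemma ratio_le {q : ℂ} (hq : ‖q‖ < 1) {c : ℂ} (hc : ‖c‖ ≤ ‖q‖ ^ 6) :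
    ‖c‖ / ‖q‖ ^ 2 ≤ ‖q‖ ^ 4 := by
  rcases eq_or_ne q 0 with h | h
  · have : ‖c‖ ≤ 0 := by simpa [h] using hc
    have hc0 : ‖c‖ = 0 := le_antisymm this (norm_nonneg c)
    simp [hc0, h]
  · have hq2 : (0:ℝ) < ‖q‖ ^ 2 := by
      have : 0 < ‖q‖ := norm_pos_iff.2 h
      positivity
    rw [div_le_iff₀ hq2]
    calc ‖c‖ ≤ ‖q‖ ^ 6 := hc
      _ = ‖q‖ ^ 4 * ‖q‖ ^ 2 := by ring

lemma phi_summable {q : ℂ} (hq : ‖q‖ < 1) {c : ℂ} (hc : ‖c‖ ≤ ‖q‖ ^ 6) :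
    Summable (phi q c) := by
  have h4 : ‖q‖ ^ 4 < 1 := pow_lt_one₀ (norm_nonneg q) hq (by norm_num)
  have hr1 : ‖c‖ / ‖q‖ ^ 2 < 1 := lt_of_le_of_lt (ratio_le hq hc) h4
  have hr0 : (0:ℝ) ≤ ‖c‖ / ‖q‖ ^ 2 := by positivity
  exact Summable.of_norm_bounded
    ((summable_geometric_of_lt_one hr0 hr1).mul_left _) (phi_norm_le hq hc)

set_option maxHeartbeats 1000000 in
lemma alg (q c u t A B D : ℂ) (hq0 : q ≠ 0) (hD : D ≠ 0) (h1 : 1 - q*u ≠ 0) :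
    (1 - c/q^2) * (t * ((1 - c*u) * A) * ((1 - u*q^2) * B) / (((1 - q*u) * D)^2))
      - (1 - c/q)^2 * (t * u * A * ((1 - u*q^2) * B) / (((1 - q*u) * D)^2))
    = (1 - u) * (t * ((1 - c*u) * A) * ((1 - u*q^2) * B) / (((1 - q*u) * D)^2))
      - (1 - u*q^2) * (t * (c/q^2) * A * B / D^2) := by
  field_simp
  ring

lemma key_id {q : ℂ} (hq : ‖q‖ < 1) (hq0 : q ≠ 0) {c : ℂ} (hc : ‖c‖ ≤ ‖q‖ ^ 6) (n : ℕ) :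
    (1 - c / q ^ 2) * phi q c n - (1 - c / q) ^ 2 * phi q (c * q ^ 2) n =
      (1 - (q ^ 2) ^ n) * phi q c n - (1 - (q ^ 2) ^ (n + 1)) * phi q c (n + 1) := by
  have hq2 : (q : ℂ) ^ 2 ≠ 0 := pow_ne_zero 2 hq0
  have e1 : qPochInf (c * (q ^ 2) ^ n) (q ^ 2)
      = (1 - c * (q ^ 2) ^ n) * qPochInf (c * (q ^ 2) ^ (n + 1)) (q ^ 2) := by
    have h := poch_split hq (arg1_le hq hc n)
    rw [h]; congr 2; rw [pow_succ]; ring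
  have e2 : qPochInf ((q ^ 2) ^ (n + 1)) (q ^ 2)
      = (1 - (q ^ 2) ^ n * q ^ 2) * qPochInf ((q ^ 2) ^ (n + 2)) (q ^ 2) := by
    have h := poch_split hq (arg2_le hq n)
    rw [h, pow_succ]
    exact rfl
  have e3 : qPochInf (q * (q ^ 2) ^ n) (q ^ 2)
      = (1 - q * (q ^ 2) ^ n) * qPochInf (q * (q ^ 2) ^ (n + 1)) (q ^ 2) := by
    have h := poch_split hq (arg3_le hq n)
    rw [h]; congr 2; rw [pow_succ]; ring
  have hDne : qPochInf (q * (q ^ 2) ^ (n + 1)) (q ^ 2) ≠ 0 :=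
    poch_ne_zero hq (arg3_le hq (n + 1))
  have h1qu : (1 : ℂ) - q * (q ^ 2) ^ n ≠ 0 :=
    one_sub_ne (lt_of_le_of_lt (arg3_le hq n) hq)
  have p1 : phi q c n = (c / q ^ 2) ^ n * ((1 - c * (q ^ 2) ^ n) *
      qPochInf (c * (q ^ 2) ^ (n + 1)) (q ^ 2)) * ((1 - (q ^ 2) ^ n * q ^ 2) *
      qPochInf ((q ^ 2) ^ (n + 2)) (q ^ 2)) / (((1 - q * (q ^ 2) ^ n) *
      qPochInf (q * (q ^ 2) ^ (n + 1)) (q ^ 2)) ^ 2) := by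
    rw [phi, e1, e2, e3]
  have p2 : phi q (c * q ^ 2) n = (c / q ^ 2) ^ n * (q ^ 2) ^ n *
      qPochInf (c * (q ^ 2) ^ (n + 1)) (q ^ 2) * ((1 - (q ^ 2) ^ n * q ^ 2) *
      qPochInf ((q ^ 2) ^ (n + 2)) (q ^ 2)) / (((1 - q * (q ^ 2) ^ n) *
      qPochInf (q * (q ^ 2) ^ (n + 1)) (q ^ 2)) ^ 2) := by
    have e4 : c * q ^ 2 * (q ^ 2) ^ n = c * (q ^ 2) ^ (n + 1) := by rw [pow_succ]; ring
    have hpow : ((c * q ^ 2) / q ^ 2) = c := mul_div_cancel_right₀ c hq2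
    have hc_n : c ^ n = (c / q ^ 2) ^ n * (q ^ 2) ^ n := by
      rw [← mul_pow, div_mul_cancel₀ _ hq2]
    rw [phi, e4, hpow, e2, e3, hc_n]
  have p3 : phi q c (n + 1) = (c / q ^ 2) ^ n * (c / q ^ 2) *
      qPochInf (c * (q ^ 2) ^ (n + 1)) (q ^ 2) * qPochInf ((q ^ 2) ^ (n + 2)) (q ^ 2) /
      (qPochInf (q * (q ^ 2) ^ (n + 1)) (q ^ 2)) ^ 2 := by
    rw [phi, show n + 1 + 1 = n + 2 from rfl, pow_succ]
  have hco : (1 : ℂ) - (q ^ 2) ^ (n + 1) = 1 - (q ^ 2) ^ n * q ^ 2 := by rw [pow_succ]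
  rw [p1, p2, p3, hco]
  exact alg q c ((q ^ 2) ^ n) ((c / q ^ 2) ^ n)
    (qPochInf (c * (q ^ 2) ^ (n + 1)) (q ^ 2)) (qPochInf ((q ^ 2) ^ (n + 2)) (q ^ 2))
    (qPochInf (q * (q ^ 2) ^ (n + 1)) (q ^ 2)) hq0 hDne h1qu

lemma norm_mul_q2 {q : ℂ} (hq : ‖q‖ < 1) {c : ℂ} (hc : ‖c‖ ≤ ‖q‖ ^ 6) :
    ‖c * q ^ 2‖ ≤ ‖q‖ ^ 6 := by
  rw [norm_mul, norm_pow]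
  have h1 : ‖q‖ ^ 2 ≤ 1 := pow_le_one₀ (norm_nonneg q) hq.le
  calc ‖c‖ * ‖q‖ ^ 2 ≤ ‖q‖ ^ 6 * 1 :=
        mul_le_mul hc h1 (by positivity) (by positivity)
    _ = ‖q‖ ^ 6 := mul_one _

lemma g_tendsto_zero {q : ℂ} (hq : ‖q‖ < 1) {c : ℂ} (hc : ‖c‖ ≤ ‖q‖ ^ 6) :
    Filter.Tendsto (fun n : ℕ => (1 - (q ^ 2) ^ n) * phi q c n) atTop (nhds 0) := by
  have h4 : ‖q‖ ^ 4 < 1 := pow_lt_one₀ (norm_nonneg q) hq (by norm_num)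
  have h40 : (0:ℝ) ≤ ‖q‖ ^ 4 := by positivity
  have hb : ∀ n : ℕ, ‖(1 - (q ^ 2) ^ n) * phi q c n‖ ≤
      2 * Real.exp (4 * Lam q) * (‖q‖ ^ 4) ^ n := by
    intro n
    rw [norm_mul]
    have h1 : ‖(1 : ℂ) - (q ^ 2) ^ n‖ ≤ 2 := by
      have hA : ‖(q ^ 2 : ℂ) ^ n‖ ≤ 1 := by
        rw [norm_pow, norm_pow]
        exact pow_le_one₀ (by positivity) (by nlinarith [norm_nonneg q])
      calc ‖(1 : ℂ) - (q ^ 2) ^ n‖ ≤ ‖(1 : ℂ)‖ + ‖(q ^ 2 : ℂ) ^ n‖ := norm_sub_le _ _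
        _ ≤ 1 + 1 := by rw [norm_one]; linarith
        _ = 2 := by norm_num
    have h2 : ‖phi q c n‖ ≤ Real.exp (4 * Lam q) * (‖q‖ ^ 4) ^ n := by
      refine le_trans (phi_norm_le hq hc n) ?_
      have := ratio_le hq hc
      gcongr
    calc ‖(1 : ℂ) - (q ^ 2) ^ n‖ * ‖phi q c n‖ ≤
        2 * (Real.exp (4 * Lam q) * (‖q‖ ^ 4) ^ n) := by
          refine mul_le_mul h1 h2 (norm_nonneg _) (by norm_num)
      _ = 2 * Real.exp (4 * Lam q) * (‖q‖ ^ 4) ^ n := by ring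
  refine squeeze_zero_norm hb ?_
  have := tendsto_pow_atTop_nhds_zero_of_lt_one h40 h4
  have h5 := this.const_mul (2 * Real.exp (4 * Lam q))
  simpa using h5

lemma tsum_rec {q : ℂ} (hq : ‖q‖ < 1) (hq0 : q ≠ 0) {c : ℂ} (hc : ‖c‖ ≤ ‖q‖ ^ 6) :
    (1 - c / q ^ 2) * ∑' n, phi q c n = (1 - c / q) ^ 2 * ∑' n, phi q (c * q ^ 2) n := by
  have hc2 : ‖c * q ^ 2‖ ≤ ‖q‖ ^ 6 := norm_mul_q2 hq hc
  have hs1 : Summable (phi q c) := phi_summable hq hc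
  have hs2 : Summable (phi q (c * q ^ 2)) := phi_summable hq hc2
  set g : ℕ → ℂ := fun n => (1 - (q ^ 2) ^ n) * phi q c n with hg
  have hsf : Summable (fun n => (1 - c / q ^ 2) * phi q c n -
      (1 - c / q) ^ 2 * phi q (c * q ^ 2) n) :=
    (hs1.mul_left _).sub (hs2.mul_left _)
  have hsg : Summable (fun n => g n - g (n + 1)) :=
    hsf.congr (fun n => key_id hq hq0 hc n)
  have hval : (∑' n, (g n - g (n + 1))) = 0 := by
    have h1 := hsg.hasSum.tendsto_sum_nat
    have h2 : ∀ N, (∑ i ∈ Finset.range N, (g i - g (i + 1))) = g 0 - g N :=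
      fun N => Finset.sum_range_sub' g N
    have h3 : g 0 = 0 := by simp [hg]
    have h4 : Filter.Tendsto (fun N => g 0 - g N) atTop (nhds 0) := by
      rw [h3]
      simpa using (g_tendsto_zero hq hc).neg
    have h5 : Filter.Tendsto (fun N => ∑ i ∈ Finset.range N, (g i - g (i + 1)))
        atTop (nhds 0) := by
      refine h4.congr (fun N => (h2 N).symm)
    exact tendsto_nhds_unique h1 h5
  have hmain : (∑' n, ((1 - c / q ^ 2) * phi q c n -
      (1 - c / q) ^ 2 * phi q (c * q ^ 2) n)) = 0 := by
    rw [tsum_congr (fun n => key_id hq hq0 hc n)]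
    exact hval
  rw [Summable.tsum_sub (hs1.mul_left _) (hs2.mul_left _), tsum_mul_left, tsum_mul_left] at hmain
  linear_combination hmain

lemma cN_norm {q : ℂ} (hq : ‖q‖ < 1) (N : ℕ) : ‖q ^ (6 + 2 * N)‖ ≤ ‖q‖ ^ 6 := by
  rw [norm_pow]
  exact pow_le_pow_of_le_one (norm_nonneg q) hq.le (by omega)

lemma recN {q : ℂ} (hq : ‖q‖ < 1) (hq0 : q ≠ 0) (N : ℕ) :
    (1 - q ^ (4 + 2 * N)) * ∑' n, phi q (q ^ (6 + 2 * N)) n =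
      (1 - q ^ (5 + 2 * N)) ^ 2 * ∑' n, phi q (q ^ (6 + 2 * (N + 1))) n := by
  have hq2 : (q : ℂ) ^ 2 ≠ 0 := pow_ne_zero 2 hq0
  have hqq : (q : ℂ) ≠ 0 := hq0
  have h := tsum_rec hq hq0 (cN_norm hq N)
  have e1 : q ^ (6 + 2 * N) / q ^ 2 = q ^ (4 + 2 * N) := by
    rw [show 6 + 2 * N = 4 + 2 * N + 2 from by omega, pow_add]
    exact mul_div_cancel_right₀ _ hq2
  have e2 : q ^ (6 + 2 * N) / q = q ^ (5 + 2 * N) := by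
    rw [show 6 + 2 * N = 5 + 2 * N + 1 from by omega, pow_add, pow_one]
    exact mul_div_cancel_right₀ _ hqq
  have e3 : q ^ (6 + 2 * N) * q ^ 2 = q ^ (6 + 2 * (N + 1)) := by ring
  rw [e1, e2] at h
  rw [h]
  congr 1
  refine tsum_congr (fun n => ?_)
  rw [e3]

lemma inv_prod {q : ℂ} (hq : ‖q‖ < 1) (hq0 : q ≠ 0) (N : ℕ) :
    (∑' n, phi q (q ^ 6) n) * ∏ k ∈ Finset.range N, (1 - q ^ (4 + 2 * k)) =
      (∑' n, phi q (q ^ (6 + 2 * N)) n) *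
        (∏ k ∈ Finset.range N, (1 - q ^ (5 + 2 * k))) ^ 2 := by
  induction N with
  | zero => simp
  | succ N ih =>
      rw [Finset.prod_range_succ, Finset.prod_range_succ]
      linear_combination (1 - q ^ (4 + 2 * N)) * ih +
        (∏ k ∈ Finset.range N, (1 - q ^ (5 + 2 * k))) ^ 2 * recN hq hq0 N

lemma poch_prod_formula {q : ℂ} (hq : ‖q‖ < 1) (N : ℕ) :
    qPochInf (q ^ 6) (q ^ 2) =
      (∏ k ∈ Finset.range N, (1 - q ^ 6 * (q ^ 2) ^ k)) *
        qPochInf (q ^ 6 * (q ^ 2) ^ N) (q ^ 2) := by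
  have h6 : ‖(q:ℂ) ^ 6‖ ≤ ‖q‖ ^ 6 := by rw [norm_pow]
  induction N with
  | zero => simp
  | succ N ih =>
      have hsplit := poch_split hq (arg1_le hq h6 N)
      have harg : q ^ 6 * (q ^ 2) ^ N * q ^ 2 = q ^ 6 * (q ^ 2) ^ (N + 1) := by
        rw [pow_succ]; ring
      rw [Finset.prod_range_succ, ih, hsplit, harg]
      ring

lemma tail_tendsto_one {q : ℂ} (hq : ‖q‖ < 1) :
    Filter.Tendsto (fun N => qPochInf (q ^ (6 + 2 * N)) (q ^ 2)) atTop (nhds 1) := by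
  have h6 : ‖(q:ℂ) ^ 6‖ ≤ ‖q‖ ^ 6 := by rw [norm_pow]
  have h6' : ‖(q:ℂ) ^ 6‖ ≤ ‖q‖ := by
    rw [norm_pow]; exact norm_le_one hq (by norm_num)
  set W : ℂ := qPochInf (q ^ 6) (q ^ 2) with hW
  have hWne : W ≠ 0 := poch_ne_zero hq h6'
  have hPcnv : Filter.Tendsto (fun N => ∏ k ∈ Finset.range N, (1 - q ^ 6 * (q ^ 2) ^ k))
      atTop (nhds W) := Multipliable.tendsto_prod_tprod_nat (mult hq h6')
  have hPne : ∀ N : ℕ, (∏ k ∈ Finset.range N, (1 - q ^ 6 * (q ^ 2) ^ k)) ≠ 0 := by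
    intro N
    refine Finset.prod_ne_zero_iff.2 (fun k _ => ?_)
    exact one_sub_ne (lt_of_le_of_lt (arg1_le hq h6 k) hq)
  have heq : ∀ N : ℕ, qPochInf (q ^ (6 + 2 * N)) (q ^ 2) =
      W / ∏ k ∈ Finset.range N, (1 - q ^ 6 * (q ^ 2) ^ k) := by
    intro N
    have harg : q ^ (6 + 2 * N) = q ^ 6 * (q ^ 2) ^ N := by
      rw [← pow_mul, ← pow_add]
    rw [harg, eq_div_iff (hPne N), mul_comm]
    exact (poch_prod_formula hq N).symm
  have hlim : Filter.Tendsto (fun N => W / ∏ k ∈ Finset.range N, (1 - q ^ 6 * (q ^ 2) ^ k))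
      atTop (nhds 1) := by
    have := Filter.Tendsto.div (tendsto_const_nhds (x := W)) hPcnv hWne
    rw [div_self hWne] at this
    exact this
  exact hlim.congr (fun N => (heq N).symm)

lemma phi_zero_val {q : ℂ} (c : ℂ) :
    phi q c 0 = qPochInf c (q ^ 2) * qPochInf (q ^ 2) (q ^ 2) / (qPochInf q (q ^ 2)) ^ 2 := by
  rw [phi]
  norm_num

lemma PhiN_tendsto {q : ℂ} (hq : ‖q‖ < 1) (hq0 : q ≠ 0) :
    Filter.Tendsto (fun N => ∑' n, phi q (q ^ (6 + 2 * N)) n) atTop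
      (nhds (qPochInf (q ^ 2) (q ^ 2) / (qPochInf q (q ^ 2)) ^ 2)) := by
  have hnq : (0:ℝ) < ‖q‖ := norm_pos_iff.2 hq0
  have h4 : ‖q‖ ^ 4 < 1 := pow_lt_one₀ (norm_nonneg q) hq (by norm_num)
  have h2 : ‖q‖ ^ 2 < 1 := pow_lt_one₀ (norm_nonneg q) hq (by norm_num)
  -- decomposition
  have hdec : ∀ N : ℕ, (∑' n, phi q (q ^ (6 + 2 * N)) n) =
      phi q (q ^ (6 + 2 * N)) 0 + ∑' n, phi q (q ^ (6 + 2 * N)) (n + 1) := by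
    intro N
    exact Summable.tsum_eq_zero_add (phi_summable hq (cN_norm hq N))
  -- first term tendsto
  have hT1 : Filter.Tendsto (fun N => phi q (q ^ (6 + 2 * N)) 0) atTop
      (nhds (qPochInf (q ^ 2) (q ^ 2) / (qPochInf q (q ^ 2)) ^ 2)) := by
    have h := ((tail_tendsto_one hq).mul
      (tendsto_const_nhds (x := qPochInf (q ^ 2) (q ^ 2)))).div_const
      ((qPochInf q (q ^ 2)) ^ 2)
    rw [one_mul] at h
    refine h.congr (fun N => ?_)
    rw [phi_zero_val]
  -- tail bound
  have hrho : ∀ N : ℕ, ‖q ^ (6 + 2 * N)‖ / ‖q‖ ^ 2 = ‖q‖ ^ (4 + 2 * N) := by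
    intro N
    rw [norm_pow, show 6 + 2 * N = 4 + 2 * N + 2 from by omega, pow_add]
    rw [mul_div_cancel_right₀]
    positivity
  have hrho4 : ∀ N : ℕ, ‖q‖ ^ (4 + 2 * N) ≤ ‖q‖ ^ 4 :=
    fun N => pow_le_pow_of_le_one (norm_nonneg q) hq.le (by omega)
  have hT2 : Filter.Tendsto (fun N => ∑' n, phi q (q ^ (6 + 2 * N)) (n + 1)) atTop
      (nhds 0) := by
    set C2 : ℝ := Real.exp (4 * Lam q) * (1 - ‖q‖ ^ 4)⁻¹ * ‖q‖ ^ 4 with hC2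
    have hb : ∀ N : ℕ, ‖∑' n, phi q (q ^ (6 + 2 * N)) (n + 1)‖ ≤ C2 * (‖q‖ ^ 2) ^ N := by
      intro N
      have hterm : ∀ n : ℕ, ‖phi q (q ^ (6 + 2 * N)) (n + 1)‖ ≤
          (Real.exp (4 * Lam q) * ‖q‖ ^ (4 + 2 * N)) * (‖q‖ ^ 4) ^ n := by
        intro n
        refine le_trans (phi_norm_le hq (cN_norm hq N) (n + 1)) ?_
        rw [hrho N, pow_succ']
        have hone : (‖q‖ ^ (4 + 2 * N)) ^ n ≤ (‖q‖ ^ 4) ^ n :=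
          pow_le_pow_left₀ (by positivity) (hrho4 N) n
        calc Real.exp (4 * Lam q) * (‖q‖ ^ (4 + 2 * N) * (‖q‖ ^ (4 + 2 * N)) ^ n) ≤
            Real.exp (4 * Lam q) * (‖q‖ ^ (4 + 2 * N) * (‖q‖ ^ 4) ^ n) := by
              gcongr
          _ = (Real.exp (4 * Lam q) * ‖q‖ ^ (4 + 2 * N)) * (‖q‖ ^ 4) ^ n := by ring
      have hgeo : Summable (fun n : ℕ => (Real.exp (4 * Lam q) * ‖q‖ ^ (4 + 2 * N)) *
          (‖q‖ ^ 4) ^ n) :=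
        (summable_geometric_of_lt_one (by positivity) h4).mul_left _
      have hsn : Summable (fun n : ℕ => ‖phi q (q ^ (6 + 2 * N)) (n + 1)‖) :=
        Summable.of_nonneg_of_le (fun n => norm_nonneg _) hterm hgeo
      calc ‖∑' n, phi q (q ^ (6 + 2 * N)) (n + 1)‖ ≤
          ∑' n, ‖phi q (q ^ (6 + 2 * N)) (n + 1)‖ := norm_tsum_le_tsum_norm hsn
        _ ≤ ∑' n : ℕ, (Real.exp (4 * Lam q) * ‖q‖ ^ (4 + 2 * N)) * (‖q‖ ^ 4) ^ n :=
            Summable.tsum_le_tsum hterm hsn hgeo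
        _ = (Real.exp (4 * Lam q) * ‖q‖ ^ (4 + 2 * N)) * (1 - ‖q‖ ^ 4)⁻¹ := by
            rw [tsum_mul_left, tsum_geometric_of_lt_one (by positivity) h4]
        _ = C2 * (‖q‖ ^ 2) ^ N := by
            rw [hC2, show 4 + 2 * N = 4 + 2 * N from rfl, pow_add, pow_mul]
            ring
    refine squeeze_zero_norm hb ?_
    have := (tendsto_pow_atTop_nhds_zero_of_lt_one (by positivity) h2).const_mul C2
    simpa using this
  have := hT1.add hT2
  rw [add_zero] at this
  exact this.congr (fun N => (hdec N).symm)

lemma p4lim {q : ℂ} (hq : ‖q‖ < 1) :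
    Filter.Tendsto (fun N => ∏ k ∈ Finset.range N, (1 - q ^ (4 + 2 * k))) atTop
      (nhds (qPochInf (q ^ 4) (q ^ 2))) := by
  have h4' : ‖(q:ℂ) ^ 4‖ ≤ ‖q‖ := by
    rw [norm_pow]; exact norm_le_one hq (by norm_num)
  have h := Multipliable.tendsto_prod_tprod_nat (mult hq h4')
  refine h.congr (fun N => Finset.prod_congr rfl (fun k _ => ?_))
  congr 1
  ring

lemma p5lim {q : ℂ} (hq : ‖q‖ < 1) :
    Filter.Tendsto (fun N => ∏ k ∈ Finset.range N, (1 - q ^ (5 + 2 * k))) atTop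
      (nhds (qPochInf (q ^ 5) (q ^ 2))) := by
  have h5' : ‖(q:ℂ) ^ 5‖ ≤ ‖q‖ := by
    rw [norm_pow]; exact norm_le_one hq (by norm_num)
  have h := Multipliable.tendsto_prod_tprod_nat (mult hq h5')
  refine h.congr (fun N => Finset.prod_congr rfl (fun k _ => ?_))
  congr 1
  ring

lemma key_eq {q : ℂ} (hq : ‖q‖ < 1) (hq0 : q ≠ 0) :
    (∑' n, phi q (q ^ 6) n) * qPochInf (q ^ 4) (q ^ 2) =
      (qPochInf (q ^ 2) (q ^ 2) / (qPochInf q (q ^ 2)) ^ 2) *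
        (qPochInf (q ^ 5) (q ^ 2)) ^ 2 := by
  have hA : Filter.Tendsto (fun N => (∑' n, phi q (q ^ 6) n) *
      ∏ k ∈ Finset.range N, (1 - q ^ (4 + 2 * k))) atTop
      (nhds ((∑' n, phi q (q ^ 6) n) * qPochInf (q ^ 4) (q ^ 2))) :=
    (p4lim hq).const_mul _
  have hB : Filter.Tendsto (fun N => (∑' n, phi q (q ^ (6 + 2 * N)) n) *
      (∏ k ∈ Finset.range N, (1 - q ^ (5 + 2 * k))) ^ 2) atTop
      (nhds ((qPochInf (q ^ 2) (q ^ 2) / (qPochInf q (q ^ 2)) ^ 2) *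
        (qPochInf (q ^ 5) (q ^ 2)) ^ 2)) :=
    (PhiN_tendsto hq hq0).mul ((p5lim hq).pow 2)
  have hC : Filter.Tendsto (fun N => (∑' n, phi q (q ^ 6) n) *
      ∏ k ∈ Finset.range N, (1 - q ^ (4 + 2 * k))) atTop
      (nhds ((qPochInf (q ^ 2) (q ^ 2) / (qPochInf q (q ^ 2)) ^ 2) *
        (qPochInf (q ^ 5) (q ^ 2)) ^ 2)) :=
    hB.congr (fun N => (inv_prod hq hq0 N).symm)
  exact tendsto_nhds_unique hA hC

end Stmt15

open Stmt15 in
theorem stmt_15 (q : ℂ) (hq : ‖q‖ < 1) :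
    (∑' n : ℕ, q ^ (4 * n + 2) * qPochInf (q ^ (2 * n + 6)) (q ^ 2) *
        qPochInf (q ^ (2 * n + 2)) (q ^ 2) / (qPochInf (q ^ (2 * n + 1)) (q ^ 2)) ^ 2) =
      q ^ 2 * (1 + q) / ((1 - q) * (1 - q ^ 3) ^ 2) := by
  by_cases hq0 : q = 0
  · subst hq0
    have h0 : ∀ n : ℕ, (0:ℂ) ^ (4 * n + 2) * qPochInf ((0:ℂ) ^ (2 * n + 6)) ((0:ℂ) ^ 2) *
        qPochInf ((0:ℂ) ^ (2 * n + 2)) ((0:ℂ) ^ 2) /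
        (qPochInf ((0:ℂ) ^ (2 * n + 1)) ((0:ℂ) ^ 2)) ^ 2 = 0 := by
      intro n
      rw [zero_pow (by omega)]
      simp
    rw [tsum_congr h0]
    simp
  · have hq2 : (q : ℂ) ^ 2 ≠ 0 := pow_ne_zero 2 hq0
    have hterm : ∀ n : ℕ, q ^ (4 * n + 2) * qPochInf (q ^ (2 * n + 6)) (q ^ 2) *
        qPochInf (q ^ (2 * n + 2)) (q ^ 2) / (qPochInf (q ^ (2 * n + 1)) (q ^ 2)) ^ 2 =
        q ^ 2 * phi q (q ^ 6) n := by
      intro n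
      have a1 : q ^ 6 * (q ^ 2) ^ n = q ^ (2 * n + 6) := by ring
      have a2 : ((q : ℂ) ^ 2) ^ (n + 1) = q ^ (2 * n + 2) := by ring
      have a3 : q * (q ^ 2) ^ n = q ^ (2 * n + 1) := by ring
      have a4 : (q ^ 6 / q ^ 2 : ℂ) = q ^ 4 := by
        rw [show (6:ℕ) = 4 + 2 from rfl, pow_add]
        exact mul_div_cancel_right₀ _ hq2
      rw [phi, a1, a2, a3, a4]
      ring
    rw [tsum_congr hterm, tsum_mul_left]
    have key := key_eq hq hq0
    -- product splits
    have s1 : qPochInf q (q ^ 2) = (1 - q) * qPochInf (q ^ 3) (q ^ 2) := by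
      have h := poch_split hq (le_refl ‖q‖)
      rw [h, show q * q ^ 2 = q ^ 3 from by ring]
    have s2 : qPochInf (q ^ 3) (q ^ 2) = (1 - q ^ 3) * qPochInf (q ^ 5) (q ^ 2) := by
      have h3 : ‖(q:ℂ) ^ 3‖ ≤ ‖q‖ := by
        rw [norm_pow]; exact norm_le_one hq (by norm_num)
      have h := poch_split hq h3
      rw [h, show q ^ 3 * q ^ 2 = q ^ 5 from by ring]
    have s3 : qPochInf (q ^ 2) (q ^ 2) = (1 - q ^ 2) * qPochInf (q ^ 4) (q ^ 2) := by
      have h2 : ‖(q:ℂ) ^ 2‖ ≤ ‖q‖ := by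
        rw [norm_pow]; exact norm_le_one hq (by norm_num)
      have h := poch_split hq h2
      rw [h, show q ^ 2 * q ^ 2 = q ^ 4 from by ring]
    have hP4 : qPochInf (q ^ 4) (q ^ 2) ≠ 0 :=
      poch_ne_zero hq (by rw [norm_pow]; exact norm_le_one hq (by norm_num))
    have hP5 : qPochInf (q ^ 5) (q ^ 2) ≠ 0 :=
      poch_ne_zero hq (by rw [norm_pow]; exact norm_le_one hq (by norm_num))
    have h1q : (1 : ℂ) - q ≠ 0 := one_sub_ne hq
    have h3q : (1 : ℂ) - q ^ 3 ≠ 0 :=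
      one_sub_ne (by rw [norm_pow]; exact lt_of_le_of_lt (norm_le_one hq (by norm_num)) hq)
    rw [s1, s2, s3] at key
    -- now solve for the tsum and finish
    have hfin : (∑' n, phi q (q ^ 6) n) = (1 - q ^ 2) / ((1 - q) ^ 2 * (1 - q ^ 3) ^ 2) := by
      field_simp at key
      have key2 : ((∑' n, phi q (q ^ 6) n) * ((1 - q) ^ 2 * (1 - q ^ 3) ^ 2)) *
          (qPochInf (q ^ 4) (q ^ 2) * qPochInf (q ^ 5) (q ^ 2) ^ 2) =
          (1 - q ^ 2) * (qPochInf (q ^ 4) (q ^ 2) * qPochInf (q ^ 5) (q ^ 2) ^ 2) := by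
        linear_combination (qPochInf (q ^ 4) (q ^ 2) * qPochInf (q ^ 5) (q ^ 2) ^ 2) * key
      have key3 := mul_right_cancel₀ (mul_ne_zero hP4 (pow_ne_zero 2 hP5)) key2
      rw [eq_div_iff (mul_ne_zero (pow_ne_zero 2 h1q) (pow_ne_zero 2 h3q))]
      linear_combination key3
    rw [hfin]
    field_simp
    ring
end
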